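/- arXiv:1205.3682 — 7 statements merged into one kernel-verified Lean document; each statement's English description precedes it below -/
import Mathlib

section
/- Let S be a ℂ-submodule of (m × n → ℂ). Suppose ρA is an extreme point of D_B(S) = {trB ρ | ρ a density matrix supported on S} (extreme points taken over ℝ, regarding complex matrices as a real vector space), and ρB is an extreme point of D_A(S) = {trA ρ | ρ a density matrix supported on S}. Then any two density matrices ρ1, ρ2 supported on S satisfying trB ρ1 = trB ρ2 = ρA and trA ρ1 = trA ρ2 = ρB are equal; moreover, if such a pre-image exists, it is a pure state, i.e., it equals the outer product |ψ⟩⟨ψ| of some unit vector ψ ∈ S. -/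
open scoped ComplexOrder

noncomputable section

/-- Partial trace over the second factor. -/
def trB {m n : Type*} [Fintype n] (ρ : Matrix (m × n) (m × n) ℂ) : Matrix m m ℂ :=
  Matrix.of fun i i' => ∑ j, ρ (i, j) (i', j)

/-- Partial trace over the first factor. -/
def trA {m n : Type*} [Fintype m] (ρ : Matrix (m × n) (m × n) ℂ) : Matrix n n ℂ :=
  Matrix.of fun j j' => ∑ i, ρ (i, j) (i, j')

/-- The outer product `|ψ⟩⟨φ|`. -/
def outer {k : Type*} (ψ φ : k → ℂ) : Matrix k k ℂ :=
  Matrix.of fun x y => ψ x * (starRingEnd ℂ) (φ y)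

/-- A density matrix: positive semidefinite with trace one. -/
def IsDensity {k : Type*} [Fintype k] (ρ : Matrix k k ℂ) : Prop :=
  ρ.PosSemidef ∧ ρ.trace = 1

/-- `P` is the matrix of the orthogonal projection onto the submodule `S`. -/
def IsOrthProjOnto {k : Type*} [Fintype k] (S : Submodule ℂ (k → ℂ)) (P : Matrix k k ℂ) : Prop :=
  P.IsHermitian ∧ P * P = P ∧ (∀ x, P.mulVec x ∈ S) ∧ ∀ y ∈ S, P.mulVec y = y

/-- `T` is supported on `S`: `P * T * P = T` for the orthogonal projection `P` onto `S`. -/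
def SupportedOn {k : Type*} [Fintype k] (S : Submodule ℂ (k → ℂ)) (T : Matrix k k ℂ) : Prop :=
  ∃ P, IsOrthProjOnto S P ∧ P * T * P = T

/-- The set of reduced density matrices on the first factor. -/
def DB {m n : Type*} [Fintype m] [Fintype n] (S : Submodule ℂ (m × n → ℂ)) :
    Set (Matrix m m ℂ) :=
  {σ | ∃ ρ, IsDensity ρ ∧ SupportedOn S ρ ∧ trB ρ = σ}

/-- The set of reduced density matrices on the second factor. -/
def DA {m n : Type*} [Fintype m] [Fintype n] (S : Submodule ℂ (m × n → ℂ)) :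
    Set (Matrix n n ℂ) :=
  {σ | ∃ ρ, IsDensity ρ ∧ SupportedOn S ρ ∧ trA ρ = σ}

open Matrix

set_option linter.unusedSectionVars false

section Basics
variable {k : Type*} [Fintype k]

lemma real_smul_mat {a b : Type*} (r : ℝ) (M : Matrix a b ℂ) : r • M = (r : ℂ) • M := by
  ext i j; simp [Complex.real_smul]

lemma sum_normsq_coe (χ : k → ℂ) :
    ((∑ x, ‖χ x‖ ^ 2 : ℝ) : ℂ) = ∑ x, χ x * (starRingEnd ℂ) (χ x) := by
  push_cast
  refine Finset.sum_congr rfl fun x _ => ?_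
  rw [Complex.mul_conj']

lemma outer_conjTranspose (ψ φ : k → ℂ) : (outer ψ φ)ᴴ = outer φ ψ := by
  ext x y; simp [outer, Matrix.conjTranspose_apply, mul_comm]

lemma outer_posSemidef (ψ : k → ℂ) : (outer ψ ψ).PosSemidef := by
  have h := Matrix.posSemidef_self_mul_conjTranspose
    (Matrix.of (fun x (_ : Unit) => ψ x) : Matrix k Unit ℂ)
  have he : (Matrix.of (fun x (_ : Unit) => ψ x) : Matrix k Unit ℂ)
      * (Matrix.of (fun x (_ : Unit) => ψ x) : Matrix k Unit ℂ)ᴴ = outer ψ ψ := by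
    ext x y
    simp [Matrix.mul_apply, outer, Matrix.conjTranspose_apply]
  rwa [he] at h

lemma trace_outer (ψ φ : k → ℂ) : (outer ψ φ).trace = ∑ x, ψ x * (starRingEnd ℂ) (φ x) := by
  simp [Matrix.trace, outer, Matrix.diag]

lemma trace_outer_self (ψ : k → ℂ) (h : (∑ x, ‖ψ x‖ ^ 2) = 1) : (outer ψ ψ).trace = 1 := by
  rw [trace_outer, ← sum_normsq_coe, h, Complex.ofReal_one]

lemma mul_outer (P : Matrix k k ℂ) (χ φ : k → ℂ) :
    P * outer χ φ = outer (P.mulVec χ) φ := by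
  ext x y; simp [outer, Matrix.mul_apply, Matrix.mulVec, dotProduct, Finset.sum_mul,
    mul_assoc]

lemma outer_mul (P : Matrix k k ℂ) (hP : P.IsHermitian) (χ φ : k → ℂ) :
    outer χ φ * P = outer χ (P.mulVec φ) := by
  ext x y
  simp only [outer, Matrix.mul_apply, Matrix.of_apply, Matrix.mulVec, dotProduct,
    map_sum, _root_.map_mul, Finset.mul_sum]
  refine Finset.sum_congr rfl fun z _ => ?_
  have h : (starRingEnd ℂ) (P y z) = P z y := by
    have := congrFun (congrFun hP.eq z) y
    simpa [Matrix.conjTranspose_apply] using this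
  rw [h]; ring

end Basics

section Proj
variable {k : Type*} [Fintype k] [DecidableEq k] {S : Submodule ℂ (k → ℂ)}

lemma mat_ext_mulVec {A B : Matrix k k ℂ} (h : ∀ v, A.mulVec v = B.mulVec v) : A = B := by
  ext i j
  have := congrFun (h (Pi.single j 1)) i
  simpa using this

lemma orthProj_unique {P Q : Matrix k k ℂ} (hP : IsOrthProjOnto S P)
    (hQ : IsOrthProjOnto S Q) : P = Q := by
  have h1 : Q * P = P := by
    apply mat_ext_mulVec
    intro v
    rw [← Matrix.mulVec_mulVec]
    exact hQ.2.2.2 _ (hP.2.2.1 v)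
  have h2 : P * Q = Q := by
    apply mat_ext_mulVec
    intro v
    rw [← Matrix.mulVec_mulVec]
    exact hP.2.2.2 _ (hQ.2.2.1 v)
  calc P = Pᴴ := hP.1.symm
    _ = (Q * P)ᴴ := by rw [h1]
    _ = Pᴴ * Qᴴ := Matrix.conjTranspose_mul Q P
    _ = P * Q := by rw [hP.1.eq, hQ.1.eq]
    _ = Q := h2

lemma supportedOn_outer {P : Matrix k k ℂ} (hP : IsOrthProjOnto S P) {χ φ : k → ℂ}
    (hχ : χ ∈ S) (hφ : φ ∈ S) : SupportedOn S (outer χ φ) := by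
  refine ⟨P, hP, ?_⟩
  rw [mul_outer, outer_mul P hP.1, hP.2.2.2 _ hχ, hP.2.2.2 _ hφ]

lemma posSemidef_real_smul {M : Matrix k k ℂ} (hM : M.PosSemidef) {a : ℝ} (ha : 0 ≤ a) :
    ((a : ℂ) • M).PosSemidef := by
  refine Matrix.posSemidef_iff_dotProduct_mulVec.mpr ⟨?_, ?_⟩
  · unfold Matrix.IsHermitian
    rw [Matrix.conjTranspose_smul, hM.1.eq]
    simp [Complex.conj_ofReal]
  · intro x
    rw [Matrix.smul_mulVec, dotProduct_smul, smul_eq_mul]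
    exact mul_nonneg (by exact_mod_cast Complex.zero_le_real.2 ha) (hM.dotProduct_mulVec_nonneg x)

lemma density_combo {ρ1 ρ2 : Matrix k k ℂ} (h1 : IsDensity ρ1) (h2 : IsDensity ρ2)
    (s1 : SupportedOn S ρ1) (s2 : SupportedOn S ρ2) {a b : ℝ}
    (ha : 0 ≤ a) (hb : 0 ≤ b) (hab : a + b = 1) :
    IsDensity ((a : ℂ) • ρ1 + (b : ℂ) • ρ2) ∧ SupportedOn S ((a : ℂ) • ρ1 + (b : ℂ) • ρ2) := by
  obtain ⟨P, hP, hPe⟩ := s1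
  obtain ⟨Q, hQ, hQe⟩ := s2
  have hPQ : P = Q := orthProj_unique hP hQ
  subst hPQ
  refine ⟨⟨Matrix.PosSemidef.add (posSemidef_real_smul h1.1 ha) (posSemidef_real_smul h2.1 hb), ?_⟩, P, hP, ?_⟩
  · rw [Matrix.trace_add, Matrix.trace_smul, Matrix.trace_smul, h1.2, h2.2]
    simp only [smul_eq_mul, mul_one]
    exact_mod_cast congrArg (Complex.ofReal) hab
  · rw [Matrix.mul_add, Matrix.add_mul, Matrix.mul_smul, Matrix.smul_mul,
      Matrix.mul_smul, Matrix.smul_mul, hPe, hQe]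

end Proj

section Lin
variable {m n : Type*} [Fintype m] [Fintype n] [DecidableEq m] [DecidableEq n]

def trBL : Matrix (m × n) (m × n) ℂ →ₗ[ℂ] Matrix m m ℂ where
  toFun := trB
  map_add' A B := by ext i i'; simp [trB, Finset.sum_add_distrib]
  map_smul' c A := by ext i i'; simp [trB, Finset.mul_sum]

def trAL : Matrix (m × n) (m × n) ℂ →ₗ[ℂ] Matrix n n ℂ where
  toFun := trA
  map_add' A B := by ext j j'; simp [trA, Finset.sum_add_distrib]
  map_smul' c A := by ext j j'; simp [trA, Finset.mul_sum]

variable {S : Submodule ℂ (m × n → ℂ)}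

lemma convex_DB : Convex ℝ (DB S) := by
  rintro σ1 ⟨ρ1, h1, s1, rfl⟩ σ2 ⟨ρ2, h2, s2, rfl⟩ a b ha hb hab
  obtain ⟨hd, hs⟩ := density_combo h1 h2 s1 s2 ha hb hab
  refine ⟨(a : ℂ) • ρ1 + (b : ℂ) • ρ2, hd, hs, ?_⟩
  have h : trB ((a : ℂ) • ρ1 + (b : ℂ) • ρ2) = (a : ℂ) • trB ρ1 + (b : ℂ) • trB ρ2 := by
    ext i i'; simp [trB, Finset.sum_add_distrib, Finset.mul_sum]
  rw [h, ← real_smul_mat, ← real_smul_mat]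

lemma convex_DA : Convex ℝ (DA S) := by
  rintro σ1 ⟨ρ1, h1, s1, rfl⟩ σ2 ⟨ρ2, h2, s2, rfl⟩ a b ha hb hab
  obtain ⟨hd, hs⟩ := density_combo h1 h2 s1 s2 ha hb hab
  refine ⟨(a : ℂ) • ρ1 + (b : ℂ) • ρ2, hd, hs, ?_⟩
  have h : trA ((a : ℂ) • ρ1 + (b : ℂ) • ρ2) = (a : ℂ) • trA ρ1 + (b : ℂ) • trA ρ2 := by
    ext i i'; simp [trA, Finset.sum_add_distrib, Finset.mul_sum]
  rw [h, ← real_smul_mat, ← real_smul_mat]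

end Lin

section ExtremeSum

lemma extremePoint_finsum {E : Type*} [AddCommGroup E] [Module ℝ E] {A : Set E}
    (hconv : Convex ℝ A) {x : E} (hx : x ∈ Set.extremePoints ℝ A) {ι : Type*}
    [DecidableEq ι] (s : Finset ι) (p : ι → ℝ) (y : ι → E)
    (hp : ∀ j ∈ s, 0 < p j) (hsum : ∑ j ∈ s, p j = 1)
    (hy : ∀ j ∈ s, y j ∈ A) (hxs : ∑ j ∈ s, p j • y j = x) :
    ∀ j ∈ s, y j = x := by
  classical
  induction s using Finset.induction_on generalizing p with
  | empty => intro j hj; exact absurd hj (Finset.notMem_empty j)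
  | @insert a t hat ih =>
    rw [Finset.sum_insert hat] at hsum hxs
    by_cases hte : t = ∅
    · subst hte
      simp only [Finset.sum_empty, add_zero] at hsum hxs
      intro j hj
      rw [Finset.mem_insert] at hj
      rcases hj with rfl | hj
      · rw [hsum, one_smul] at hxs; exact hxs
      · exact absurd hj (Finset.notMem_empty j)
    · have htne : t.Nonempty := Finset.nonempty_iff_ne_empty.mpr hte
      set q : ℝ := ∑ j ∈ t, p j with hq
      have hq0 : 0 < q :=
        Finset.sum_pos (fun j hj => hp j (Finset.mem_insert_of_mem hj)) htne
      have hpa : 0 < p a := hp a (Finset.mem_insert_self a t)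
      set z : E := q⁻¹ • ∑ j ∈ t, p j • y j with hz
      have hzA : z ∈ A := by
        rw [hz, Finset.smul_sum]
        simp only [smul_smul]
        exact hconv.sum_mem (fun j hj => mul_nonneg (inv_nonneg.mpr hq0.le) (hp j (Finset.mem_insert_of_mem hj)).le)
          (by rw [← Finset.mul_sum, ← hq, inv_mul_cancel₀ hq0.ne'])
          (fun j hj => hy j (Finset.mem_insert_of_mem hj))
      have hseg : x ∈ openSegment ℝ (y a) z := by
        refine ⟨p a, q, hpa, hq0, hsum, ?_⟩
        rw [hz, smul_smul, mul_inv_cancel₀ hq0.ne', one_smul, hxs]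
      obtain ⟨hya, hzx⟩ := (mem_extremePoints.1 hx).2 _ (hy a (Finset.mem_insert_self a t)) _ hzA hseg
      intro j hj
      rcases Finset.mem_insert.mp hj with rfl | hj
      · exact hya
      · refine ih (fun i => q⁻¹ * p i) ?_ ?_ (fun i hi => hy i (Finset.mem_insert_of_mem hi)) ?_ j hj
        · exact fun i hi => mul_pos (inv_pos.mpr hq0) (hp i (Finset.mem_insert_of_mem hi))
        · rw [← Finset.mul_sum, ← hq, inv_mul_cancel₀ hq0.ne']
        · have : ∑ i ∈ t, (q⁻¹ * p i) • y i = q⁻¹ • ∑ i ∈ t, p i • y i := by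
            rw [Finset.smul_sum]; simp only [smul_smul]
          rw [this, ← hz, hzx]

end ExtremeSum

section Cross
variable {m n k : Type*} [Fintype m] [Fintype n] [Fintype k]
variable {S : Submodule ℂ (m × n → ℂ)}

set_option maxHeartbeats 1000000 in
lemma cross_step (T : Matrix (m × n) (m × n) ℂ →ₗ[ℂ] Matrix k k ℂ)
    {D₀ : Set (Matrix k k ℂ)} {ρ₀ : Matrix k k ℂ}
    (hext : ρ₀ ∈ Set.extremePoints ℝ D₀)
    (hmem : ∀ χ : m × n → ℂ, χ ∈ S → (∑ x, ‖χ x‖ ^ 2) = 1 → T (outer χ χ) ∈ D₀)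
    {ψ φ : m × n → ℂ} (hψS : ψ ∈ S) (hφS : φ ∈ S)
    (hψ1 : (∑ x, ‖ψ x‖ ^ 2) = 1) (hφ1 : (∑ x, ‖φ x‖ ^ 2) = 1)
    (hψρ : T (outer ψ ψ) = ρ₀) (hφρ : T (outer φ φ) = ρ₀)
    (u : ℂ) (hu : u * (starRingEnd ℂ) u = 1) :
    u • T (outer φ ψ) + (starRingEnd ℂ) u • T (outer ψ φ)
      = (u * (starRingEnd ℂ) (∑ x, ψ x * (starRingEnd ℂ) (φ x))
        + (starRingEnd ℂ) u * (∑ x, ψ x * (starRingEnd ℂ) (φ x))) • ρ₀ := by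
  set c : ℂ := ∑ x, ψ x * (starRingEnd ℂ) (φ x) with hc
  have hcconj : (starRingEnd ℂ) c = ∑ x, φ x * (starRingEnd ℂ) (ψ x) := by
    rw [hc, map_sum]
    refine Finset.sum_congr rfl fun x _ => ?_
    rw [_root_.map_mul, Complex.conj_conj]; ring
  set χ : m × n → ℂ := ψ + u • φ with hχdef
  set χ' : m × n → ℂ := ψ - u • φ with hχ'def
  have houter : outer χ χ
      = outer ψ ψ + outer φ φ + u • outer φ ψ + (starRingEnd ℂ) u • outer ψ φ := by
    ext x y
    simp only [outer, Matrix.of_apply, Matrix.add_apply, Matrix.smul_apply, hχdef,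
      Pi.add_apply, Pi.smul_apply, smul_eq_mul, map_add, _root_.map_mul]
    linear_combination (φ x * (starRingEnd ℂ) (φ y)) * hu
  have houter' : outer χ' χ'
      = outer ψ ψ + outer φ φ - u • outer φ ψ - (starRingEnd ℂ) u • outer ψ φ := by
    ext x y
    simp only [outer, Matrix.of_apply, Matrix.add_apply, Matrix.sub_apply, Matrix.smul_apply,
      hχ'def, Pi.sub_apply, Pi.smul_apply, smul_eq_mul, map_sub, map_add, _root_.map_mul]
    linear_combination (φ x * (starRingEnd ℂ) (φ y)) * hu
  set t : ℝ := ∑ x, ‖χ x‖ ^ 2 with ht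
  set t' : ℝ := ∑ x, ‖χ' x‖ ^ 2 with ht'
  have ht0 : 0 ≤ t := Finset.sum_nonneg fun x _ => by positivity
  have ht'0 : 0 ≤ t' := Finset.sum_nonneg fun x _ => by positivity
  have hct : ((t : ℝ) : ℂ) = 2 + (u * (starRingEnd ℂ) c + (starRingEnd ℂ) u * c) := by
    have h1 := congrArg Matrix.trace houter
    rw [Matrix.trace_add, Matrix.trace_add, Matrix.trace_add, Matrix.trace_smul,
      Matrix.trace_smul, trace_outer_self ψ hψ1, trace_outer_self φ hφ1,
      trace_outer φ ψ, trace_outer ψ φ, ← hcconj, ← hc] at h1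
    rw [ht, sum_normsq_coe, ← trace_outer χ χ, h1]
    simp only [smul_eq_mul]; ring
  have hct' : ((t' : ℝ) : ℂ) = 2 - (u * (starRingEnd ℂ) c + (starRingEnd ℂ) u * c) := by
    have h1 := congrArg Matrix.trace houter'
    rw [Matrix.trace_sub, Matrix.trace_sub, Matrix.trace_add, Matrix.trace_smul,
      Matrix.trace_smul, trace_outer_self ψ hψ1, trace_outer_self φ hφ1,
      trace_outer φ ψ, trace_outer ψ φ, ← hcconj, ← hc] at h1
    rw [ht', sum_normsq_coe, ← trace_outer χ' χ', h1]
    simp only [smul_eq_mul]; ring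
  by_cases hte : t = 0
  · -- χ = 0, i.e. ψ = -(u • φ)
    have hχ0 : ∀ x, χ x = 0 := by
      intro x
      have h0 := (Finset.sum_eq_zero_iff_of_nonneg
        (fun x _ => by positivity)).mp (ht.symm.trans hte) x (Finset.mem_univ x)
      have : ‖χ x‖ = 0 := by nlinarith [norm_nonneg (χ x)]
      exact norm_eq_zero.mp this
    have hψφ : ∀ x, ψ x = -(u * φ x) := by
      intro x
      have := hχ0 x
      simp only [hχdef, Pi.add_apply, Pi.smul_apply, smul_eq_mul] at this
      exact eq_neg_of_add_eq_zero_left this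
    have hoψφ : outer ψ φ = (-u) • outer φ φ := by
      ext x y
      simp only [outer, Matrix.of_apply, Matrix.smul_apply, smul_eq_mul, hψφ x]; ring
    have hoφψ : outer φ ψ = (-((starRingEnd ℂ) u)) • outer φ φ := by
      ext x y
      simp only [outer, Matrix.of_apply, Matrix.smul_apply, smul_eq_mul, hψφ y, map_neg,
        _root_.map_mul]
      ring
    have hceq : c = -u := by
      have h2 : c = -u * ∑ x, φ x * (starRingEnd ℂ) (φ x) := by
        rw [hc, Finset.mul_sum]
        refine Finset.sum_congr rfl fun x _ => ?_
        rw [hψφ x]; ring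
      rw [h2, ← sum_normsq_coe, hφ1]; simp
    rw [hoψφ, hoφψ, _root_.map_smul, _root_.map_smul, hφρ, hceq, smul_smul, smul_smul,
      ← add_smul]
    congr 1
  · by_cases ht'e : t' = 0
    · -- χ' = 0, i.e. ψ = u • φ
      have hχ'0 : ∀ x, χ' x = 0 := by
        intro x
        have h0 := (Finset.sum_eq_zero_iff_of_nonneg
          (fun x _ => by positivity)).mp (ht'.symm.trans ht'e) x (Finset.mem_univ x)
        have : ‖χ' x‖ = 0 := by nlinarith [norm_nonneg (χ' x)]
        exact norm_eq_zero.mp this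
      have hψφ : ∀ x, ψ x = u * φ x := by
        intro x
        have h0 := hχ'0 x
        simp only [hχ'def, Pi.sub_apply, Pi.smul_apply, smul_eq_mul] at h0
        exact sub_eq_zero.mp h0
      have hoψφ : outer ψ φ = u • outer φ φ := by
        ext x y
        simp only [outer, Matrix.of_apply, Matrix.smul_apply, smul_eq_mul, hψφ x]; ring
      have hoφψ : outer φ ψ = ((starRingEnd ℂ) u) • outer φ φ := by
        ext x y
        simp only [outer, Matrix.of_apply, Matrix.smul_apply, smul_eq_mul, hψφ y,
          _root_.map_mul]
        ring
      have hceq : c = u := by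
        have h2 : c = u * ∑ x, φ x * (starRingEnd ℂ) (φ x) := by
          rw [hc, Finset.mul_sum]
          refine Finset.sum_congr rfl fun x _ => ?_
          rw [hψφ x]; ring
        rw [h2, ← sum_normsq_coe, hφ1]; simp
      rw [hoψφ, hoφψ, _root_.map_smul, _root_.map_smul, hφρ, hceq, smul_smul, smul_smul, ← add_smul]
    · -- main case: both t and t' positive
      have hχS : χ ∈ S := S.add_mem hψS (S.smul_mem u hφS)
      have hχ'S : χ' ∈ S := S.sub_mem hψS (S.smul_mem u hφS)
      have htC : ((t : ℝ) : ℂ) ≠ 0 := Complex.ofReal_ne_zero.mpr hte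
      have ht'C : ((t' : ℝ) : ℂ) ≠ 0 := Complex.ofReal_ne_zero.mpr ht'e
      set r : ℝ := (Real.sqrt t)⁻¹ with hrdef
      set r' : ℝ := (Real.sqrt t')⁻¹ with hr'def
      have hrr : r * r = t⁻¹ := by rw [hrdef, ← mul_inv, Real.mul_self_sqrt ht0]
      have hr'r' : r' * r' = t'⁻¹ := by rw [hr'def, ← mul_inv, Real.mul_self_sqrt ht'0]
      set χh : m × n → ℂ := ((r : ℂ)) • χ with hχh
      set χ'h : m × n → ℂ := ((r' : ℂ)) • χ' with hχ'h
      have hnorm1 : (∑ x, ‖χh x‖ ^ 2) = 1 := by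
        simp only [hχh, Pi.smul_apply, smul_eq_mul, norm_mul, mul_pow, Complex.norm_real,
          Real.norm_eq_abs, sq_abs]
        rw [← Finset.mul_sum, ← ht, sq, hrr, inv_mul_cancel₀ hte]
      have hnorm1' : (∑ x, ‖χ'h x‖ ^ 2) = 1 := by
        simp only [hχ'h, Pi.smul_apply, smul_eq_mul, norm_mul, mul_pow, Complex.norm_real,
          Real.norm_eq_abs, sq_abs]
        rw [← Finset.mul_sum, ← ht', sq, hr'r', inv_mul_cancel₀ ht'e]
      have hrrC : (r : ℂ) * (r : ℂ) = ((t⁻¹ : ℝ) : ℂ) := by exact_mod_cast congrArg Complex.ofReal hrr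
      have hr'r'C : (r' : ℂ) * (r' : ℂ) = ((t'⁻¹ : ℝ) : ℂ) := by
        exact_mod_cast congrArg Complex.ofReal hr'r'
      have hoχh : outer χh χh = ((t⁻¹ : ℝ) : ℂ) • outer χ χ := by
        ext x y
        simp only [outer, hχh, Matrix.of_apply, Matrix.smul_apply, Pi.smul_apply, smul_eq_mul,
          _root_.map_mul, Complex.conj_ofReal]
        linear_combination (χ x * (starRingEnd ℂ) (χ y)) * hrrC
      have hoχ'h : outer χ'h χ'h = ((t'⁻¹ : ℝ) : ℂ) • outer χ' χ' := by
        ext x y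
        simp only [outer, hχ'h, Matrix.of_apply, Matrix.smul_apply, Pi.smul_apply, smul_eq_mul,
          _root_.map_mul, Complex.conj_ofReal]
        linear_combination (χ' x * (starRingEnd ℂ) (χ' y)) * hr'r'C
      have hσmem : T (outer χh χh) ∈ D₀ := hmem χh (S.smul_mem _ hχS) hnorm1
      have hσ'mem : T (outer χ'h χ'h) ∈ D₀ := hmem χ'h (S.smul_mem _ hχ'S) hnorm1'
      have hσ : T (outer χh χh) = ((t⁻¹ : ℝ) : ℂ) • T (outer χ χ) := by rw [hoχh, _root_.map_smul]
      have hσ' : T (outer χ'h χ'h) = ((t'⁻¹ : ℝ) : ℂ) • T (outer χ' χ') := by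
        rw [hoχ'h, _root_.map_smul]
      have hTχ : T (outer χ χ)
          = ρ₀ + ρ₀ + u • T (outer φ ψ) + (starRingEnd ℂ) u • T (outer ψ φ) := by
        rw [houter]; simp only [map_add, _root_.map_smul, hψρ, hφρ]
      have hTχ' : T (outer χ' χ')
          = ρ₀ + ρ₀ - u • T (outer φ ψ) - (starRingEnd ℂ) u • T (outer ψ φ) := by
        rw [houter']; simp only [map_add, map_sub, _root_.map_smul, hψρ, hφρ]
      have htt' : t + t' = 4 := by
        have h4 : ((t + t' : ℝ) : ℂ) = 4 := by push_cast [hct, hct'] ; ring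
        exact_mod_cast h4
      have htpos : 0 < t := lt_of_le_of_ne ht0 (Ne.symm hte)
      have ht'pos : 0 < t' := lt_of_le_of_ne ht'0 (Ne.symm ht'e)
      have e1 : ((t / 4 : ℝ) : ℂ) * ((t⁻¹ : ℝ) : ℂ) = (4⁻¹ : ℂ) := by
        push_cast
        field_simp [htC]
      have e1' : ((t' / 4 : ℝ) : ℂ) * ((t'⁻¹ : ℝ) : ℂ) = (4⁻¹ : ℂ) := by
        push_cast
        field_simp [ht'C]
      have hseg : (t / 4) • T (outer χh χh) + (t' / 4) • T (outer χ'h χ'h) = ρ₀ := by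
        rw [real_smul_mat, real_smul_mat, hσ, hσ', smul_smul, smul_smul, e1, e1']
        linear_combination (norm := module) (4⁻¹ : ℂ) • hTχ + (4⁻¹ : ℂ) • hTχ'
      have hO : ρ₀ ∈ openSegment ℝ (T (outer χh χh)) (T (outer χ'h χ'h)) :=
        ⟨t / 4, t' / 4, by positivity, by positivity, by linarith, hseg⟩
      obtain ⟨hσρ, -⟩ := (mem_extremePoints.1 hext).2 _ hσmem _ hσ'mem hO
      rw [hσ] at hσρ
      have h3 := congrArg (fun M => ((t : ℝ) : ℂ) • M) hσρ
      simp only [smul_smul] at h3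
      rw [show ((t : ℝ) : ℂ) * ((t⁻¹ : ℝ) : ℂ) = 1 from by push_cast; exact mul_inv_cancel₀ htC,
        one_smul] at h3
      rw [hct] at h3
      linear_combination (norm := module) h3 - hTχ
end Cross

section CrossFull
variable {m n k : Type*} [Fintype m] [Fintype n] [Fintype k]
variable {S : Submodule ℂ (m × n → ℂ)}

lemma cross_marginal (T : Matrix (m × n) (m × n) ℂ →ₗ[ℂ] Matrix k k ℂ)
    {D₀ : Set (Matrix k k ℂ)} {ρ₀ : Matrix k k ℂ}
    (hext : ρ₀ ∈ Set.extremePoints ℝ D₀)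
    (hmem : ∀ χ : m × n → ℂ, χ ∈ S → (∑ x, ‖χ x‖ ^ 2) = 1 → T (outer χ χ) ∈ D₀)
    {ψ φ : m × n → ℂ} (hψS : ψ ∈ S) (hφS : φ ∈ S)
    (hψ1 : (∑ x, ‖ψ x‖ ^ 2) = 1) (hφ1 : (∑ x, ‖φ x‖ ^ 2) = 1)
    (hψρ : T (outer ψ ψ) = ρ₀) (hφρ : T (outer φ φ) = ρ₀) :
    T (outer ψ φ) = (∑ x, ψ x * (starRingEnd ℂ) (φ x)) • ρ₀ := by
  set c : ℂ := ∑ x, ψ x * (starRingEnd ℂ) (φ x) with hc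
  have h1 := cross_step (S := S) T hext hmem hψS hφS hψ1 hφ1 hψρ hφρ 1 (by simp)
  have hI := cross_step (S := S) T hext hmem hψS hφS hψ1 hφ1 hψρ hφρ Complex.I
    (by rw [Complex.conj_I, mul_neg, Complex.I_mul_I, neg_neg])
  simp only [one_smul, _root_.map_one, one_mul] at h1
  rw [Complex.conj_I] at hI
  rw [← hc] at h1 hI
  ext i j
  have h1e := congrFun (congrFun h1 i) j
  have hIe := congrFun (congrFun hI i) j
  simp only [Matrix.add_apply, Matrix.smul_apply, smul_eq_mul, Matrix.neg_apply,
    neg_mul, neg_smul] at h1e hIe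
  show T (outer ψ φ) i j = (c • ρ₀) i j
  simp only [Matrix.smul_apply, smul_eq_mul]
  linear_combination (2⁻¹ : ℂ) * h1e + (2⁻¹ * Complex.I) * hIe
    + (T (outer ψ φ) i j / 2 - T (outer φ ψ) i j / 2
        + (((starRingEnd ℂ) c - c) / 2) * ρ₀ i j) * Complex.I_mul_I

end CrossFull

section Spectral
variable {k : Type*} [Fintype k] [DecidableEq k]

lemma density_decomp {ρ : Matrix k k ℂ} (hd : IsDensity ρ) :
    ∃ (p : k → ℝ) (u : k → k → ℂ),
      (∀ i, 0 ≤ p i) ∧ (∑ i, p i) = 1 ∧ (∀ i, (∑ x, ‖u i x‖ ^ 2) = 1) ∧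
      ρ = ∑ i, ((p i : ℝ) : ℂ) • outer (u i) (u i) ∧
      (∀ i, ρ.mulVec (u i) = ((p i : ℝ) : ℂ) • u i) := by
  have hherm := hd.1.1
  set U : Matrix k k ℂ := (hherm.eigenvectorUnitary : Matrix k k ℂ) with hU
  set p : k → ℝ := hherm.eigenvalues with hp
  set u : k → k → ℂ := fun i x => U x i with hu
  have hUU : Uᴴ * U = 1 := by
    have := hherm.eigenvectorUnitary.2
    rw [Unitary.mem_iff] at this
    exact this.1
  have hor : ∀ i i', (∑ x, (starRingEnd ℂ) (U x i) * U x i') = (1 : Matrix k k ℂ) i i' := by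
    intro i i'
    have := congrFun (congrFun hUU i) i'
    rw [← this, Matrix.mul_apply]
    exact Finset.sum_congr rfl fun x _ => by rw [Matrix.conjTranspose_apply]; rfl
  have hentry : ∀ x y, ρ x y = ∑ i, ((p i : ℝ) : ℂ) * (U x i * (starRingEnd ℂ) (U y i)) := by
    intro x y
    have hs := hherm.spectral_theorem
    rw [Unitary.conjStarAlgAut_apply] at hs
    have := congrFun (congrFun hs x) y
    rw [Matrix.mul_apply] at this
    rw [this]
    refine Finset.sum_congr rfl fun i _ => ?_
    rw [Matrix.mul_apply, Finset.sum_eq_single i]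
    · simp only [Matrix.diagonal_apply_eq, Function.comp_apply]
      have : (star (U : Matrix k k ℂ)) i y = (starRingEnd ℂ) (U y i) := rfl
      rw [this, hp, hU]
      simp only [RCLike.ofReal_alg, Complex.real_smul, mul_one]
      ring
    · intro b _ hb
      simp [Matrix.diagonal_apply_ne _ hb]
    · intro h; exact absurd (Finset.mem_univ i) h
  have hnorm : ∀ i, (∑ x, ‖u i x‖ ^ 2) = 1 := by
    intro i
    have h2 : ((∑ x, ‖u i x‖ ^ 2 : ℝ) : ℂ) = 1 := by
      rw [sum_normsq_coe]
      rw [show (∑ x, u i x * (starRingEnd ℂ) (u i x))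
          = ∑ x, (starRingEnd ℂ) (U x i) * U x i from
        Finset.sum_congr rfl fun x _ => by rw [hu]; ring]
      rw [hor i i, Matrix.one_apply_eq]
    exact_mod_cast h2
  have hdecomp : ρ = ∑ i, ((p i : ℝ) : ℂ) • outer (u i) (u i) := by
    ext x y
    rw [Matrix.sum_apply]
    rw [hentry x y]
    refine Finset.sum_congr rfl fun i _ => ?_
    simp only [Matrix.smul_apply, outer, Matrix.of_apply, smul_eq_mul, hu]
  have heig : ∀ i, ρ.mulVec (u i) = ((p i : ℝ) : ℂ) • u i := by
    intro i
    funext x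
    rw [Matrix.mulVec]
    show (∑ y, ρ x y * u i y) = _
    have : ∀ y, ρ x y * u i y
        = ∑ j, ((p j : ℝ) : ℂ) * U x j * ((starRingEnd ℂ) (U y j) * U y i) := by
      intro y
      rw [hentry x y, Finset.sum_mul]
      exact Finset.sum_congr rfl fun j _ => by rw [hu]; ring
    rw [Finset.sum_congr rfl fun y _ => this y, Finset.sum_comm]
    have : ∀ j, (∑ y, ((p j : ℝ) : ℂ) * U x j * ((starRingEnd ℂ) (U y j) * U y i))
        = ((p j : ℝ) : ℂ) * U x j * (1 : Matrix k k ℂ) j i := by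
      intro j
      rw [← Finset.mul_sum, hor j i]
    rw [Finset.sum_congr rfl fun j _ => this j]
    rw [Finset.sum_eq_single i]
    · rw [Matrix.one_apply_eq]
      simp [hu, smul_eq_mul]
    · intro b _ hb
      rw [Matrix.one_apply_ne hb, mul_zero]
    · intro h; exact absurd (Finset.mem_univ i) h
  have htr : (∑ i, p i) = 1 := by
    have h2 := hd.2
    rw [hdecomp] at h2
    rw [Matrix.trace_sum] at h2
    have : ∀ i, (((p i : ℝ) : ℂ) • outer (u i) (u i)).trace = ((p i : ℝ) : ℂ) := by
      intro i
      rw [Matrix.trace_smul, trace_outer_self (u i) (hnorm i), smul_eq_mul, mul_one]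
    rw [Finset.sum_congr rfl fun i _ => this i] at h2
    exact_mod_cast h2
  exact ⟨p, u, fun i => hd.1.eigenvalues_nonneg i, htr, hnorm, hdecomp, heig⟩

end Spectral

section Core
variable {m n : Type*} [Fintype m] [Fintype n]

def toMat (ψ : m × n → ℂ) : Matrix m n ℂ := Matrix.of fun i j => ψ (i, j)

lemma trB_outer (ψ φ : m × n → ℂ) : trB (outer ψ φ) = toMat ψ * (toMat φ)ᴴ := by
  ext i i'
  simp [trB, outer, toMat, Matrix.mul_apply, Matrix.conjTranspose_apply]

lemma trA_outer (ψ φ : m × n → ℂ) : trA (outer ψ φ) = ((toMat φ)ᴴ * toMat ψ)ᵀ := by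
  ext j j'
  simp [trA, outer, toMat, Matrix.mul_apply, Matrix.conjTranspose_apply, Matrix.transpose_apply,
    mul_comm]

lemma core_eq {Ψ Φ : Matrix m n ℂ} {c : ℂ}
    (h2 : Φᴴ * Φ = Ψᴴ * Ψ)
    (h3 : Ψ * Φᴴ = c • (Ψ * Ψᴴ))
    (h4 : Φᴴ * Ψ = c • (Ψᴴ * Ψ)) :
    Φ = (starRingEnd ℂ c) • Ψ := by
  set D : Matrix m n ℂ := Φ - (starRingEnd ℂ c) • Ψ with hD
  have hDH : Dᴴ = Φᴴ - c • Ψᴴ := by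
    simp [hD, Matrix.conjTranspose_smul]
  have hPsiD : Ψ * Dᴴ = 0 := by
    rw [hDH, Matrix.mul_sub, Matrix.mul_smul, h3, sub_self]
  have hPsiPhi : Ψᴴ * Φ = (starRingEnd ℂ c) • (Ψᴴ * Ψ) := by
    have := congrArg Matrix.conjTranspose h4
    simpa [Matrix.conjTranspose_smul, Matrix.conjTranspose_mul,
      (Matrix.isHermitian_conjTranspose_mul_self Ψ).eq] using this
  have hDD : Dᴴ * D = (1 - c * starRingEnd ℂ c) • (Ψᴴ * Ψ) := by
    rw [hDH, hD]
    simp only [Matrix.sub_mul, Matrix.mul_sub, Matrix.mul_smul, Matrix.smul_mul]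
    rw [h2, h4, hPsiPhi]
    module
  have hsq : (Dᴴ * D) * (Dᴴ * D) = 0 := by
    nth_rewrite 1 [hDD]
    rw [Matrix.smul_mul, Matrix.mul_assoc Ψᴴ Ψ, ← Matrix.mul_assoc Ψ Dᴴ D, hPsiD,
      Matrix.zero_mul, Matrix.mul_zero, smul_zero]
  have hM : Dᴴ * D = 0 := by
    have hherm : (Dᴴ * D)ᴴ = Dᴴ * D := (Matrix.isHermitian_conjTranspose_mul_self D).eq
    have : (Dᴴ * D)ᴴ * (Dᴴ * D) = 0 := by rw [hherm]; exact hsq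
    exact Matrix.conjTranspose_mul_self_eq_zero.mp this
  have hD0 : D = 0 := Matrix.conjTranspose_mul_self_eq_zero.mp hM
  have := sub_eq_zero.mp hD0
  linear_combination (norm := module) this
end Core

section Assembly
variable {m n : Type*} [Fintype m] [Fintype n] [DecidableEq m] [DecidableEq n]
variable {S : Submodule ℂ (m × n → ℂ)}

lemma outer_mem_DB {P : Matrix (m × n) (m × n) ℂ} (hP : IsOrthProjOnto S P)
    {χ : m × n → ℂ} (hχ : χ ∈ S) (h1 : (∑ x, ‖χ x‖ ^ 2) = 1) :
    trB (outer χ χ) ∈ DB S :=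
  ⟨outer χ χ, ⟨outer_posSemidef χ, trace_outer_self χ h1⟩, supportedOn_outer hP hχ hχ, rfl⟩

lemma outer_mem_DA {P : Matrix (m × n) (m × n) ℂ} (hP : IsOrthProjOnto S P)
    {χ : m × n → ℂ} (hχ : χ ∈ S) (h1 : (∑ x, ‖χ x‖ ^ 2) = 1) :
    trA (outer χ χ) ∈ DA S :=
  ⟨outer χ χ, ⟨outer_posSemidef χ, trace_outer_self χ h1⟩, supportedOn_outer hP hχ hχ, rfl⟩

lemma pair_outer_eq {ρA : Matrix m m ℂ} {ρB : Matrix n n ℂ}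
    (hA : ρA ∈ Set.extremePoints ℝ (DB S)) (hB : ρB ∈ Set.extremePoints ℝ (DA S))
    {P : Matrix (m × n) (m × n) ℂ} (hP : IsOrthProjOnto S P)
    {ψ φ : m × n → ℂ} (hψS : ψ ∈ S) (hφS : φ ∈ S)
    (hψ1 : (∑ x, ‖ψ x‖ ^ 2) = 1) (hφ1 : (∑ x, ‖φ x‖ ^ 2) = 1)
    (hψA : trB (outer ψ ψ) = ρA) (hψB : trA (outer ψ ψ) = ρB)
    (hφA : trB (outer φ φ) = ρA) (hφB : trA (outer φ φ) = ρB) :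
    outer φ φ = outer ψ ψ := by
  set c : ℂ := ∑ x, ψ x * (starRingEnd ℂ) (φ x) with hc
  have hXB : trB (outer ψ φ) = c • ρA := by
    have := cross_marginal (S := S) trBL hA (fun χ hχ h1 => outer_mem_DB hP hχ h1)
      hψS hφS hψ1 hφ1 hψA hφA
    rw [← hc] at this
    exact this
  have hXA : trA (outer ψ φ) = c • ρB := by
    have := cross_marginal (S := S) trAL hB (fun χ hχ h1 => outer_mem_DA hP hχ h1)
      hψS hφS hψ1 hφ1 hψB hφB
    rw [← hc] at this
    exact this
  have h3 : toMat ψ * (toMat φ)ᴴ = c • (toMat ψ * (toMat ψ)ᴴ) := by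
    rw [← trB_outer, ← trB_outer, hψA]
    exact hXB
  have h2 : (toMat φ)ᴴ * toMat φ = (toMat ψ)ᴴ * toMat ψ := by
    have h0 : ((toMat φ)ᴴ * toMat φ)ᵀ = ((toMat ψ)ᴴ * toMat ψ)ᵀ := by
      rw [← trA_outer, ← trA_outer, hφB, hψB]
    have := congrArg Matrix.transpose h0
    simpa using this
  have h4 : (toMat φ)ᴴ * toMat ψ = c • ((toMat ψ)ᴴ * toMat ψ) := by
    have h0 : ((toMat φ)ᴴ * toMat ψ)ᵀ = (c • ((toMat ψ)ᴴ * toMat ψ))ᵀ := by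
      rw [Matrix.transpose_smul, ← trA_outer, ← trA_outer, hψB]
      exact hXA
    have := congrArg Matrix.transpose h0
    simpa using this
  have hcore : toMat φ = (starRingEnd ℂ) c • toMat ψ := core_eq h2 h3 h4
  have hφψ : ∀ x : m × n, φ x = (starRingEnd ℂ) c * ψ x := by
    intro x
    have := congrFun (congrFun hcore x.1) x.2
    simpa [toMat, Matrix.smul_apply, smul_eq_mul] using this
  have hc1 : (starRingEnd ℂ) c * c = 1 := by
    have h0 : ((∑ x, ‖φ x‖ ^ 2 : ℝ) : ℂ)
        = (starRingEnd ℂ) c * c * ((∑ x, ‖ψ x‖ ^ 2 : ℝ) : ℂ) := by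
      rw [sum_normsq_coe, sum_normsq_coe, Finset.mul_sum]
      refine Finset.sum_congr rfl fun x _ => ?_
      rw [hφψ x, _root_.map_mul, Complex.conj_conj]
      ring
    rw [hψ1, hφ1] at h0
    simpa using h0.symm
  ext x y
  simp only [outer, Matrix.of_apply]
  rw [hφψ x, hφψ y, _root_.map_mul, Complex.conj_conj]
  linear_combination (ψ x * (starRingEnd ℂ) (ψ y)) * hc1

lemma pure_preimage {ρA : Matrix m m ℂ} {ρB : Matrix n n ℂ}
    (hA : ρA ∈ Set.extremePoints ℝ (DB S)) (hB : ρB ∈ Set.extremePoints ℝ (DA S))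
    (ρ : Matrix (m × n) (m × n) ℂ)
    (hd : IsDensity ρ) (hs : SupportedOn S ρ) (htB : trB ρ = ρA) (htA : trA ρ = ρB) :
    ∃ ψ : m × n → ℂ, ψ ∈ S ∧ (∑ x, ‖ψ x‖ ^ 2) = 1 ∧ ρ = outer ψ ψ := by
  classical
  obtain ⟨p, u, hp0, hp1, hun, hdecomp, heig⟩ := density_decomp hd
  obtain ⟨P, hP, hPρ⟩ := hs
  have hrange : ∀ v, ρ.mulVec v ∈ S := by
    intro v
    rw [← hPρ, Matrix.mul_assoc, ← Matrix.mulVec_mulVec]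
    exact hP.2.2.1 _
  have huS : ∀ i, p i ≠ 0 → u i ∈ S := by
    intro i hpi
    have hpiC : ((p i : ℝ) : ℂ) ≠ 0 := Complex.ofReal_ne_zero.mpr hpi
    have h0 : u i = ((p i : ℝ) : ℂ)⁻¹ • ρ.mulVec (u i) := by
      rw [heig i, smul_smul, inv_mul_cancel₀ hpiC, one_smul]
    rw [h0]
    exact S.smul_mem _ (hrange _)
  set s : Finset (m × n) := Finset.univ.filter (fun i => p i ≠ 0) with hsdef
  have hmem_s : ∀ i, i ∈ s ↔ p i ≠ 0 := by
    intro i; simp [hsdef]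
  have hsum_s : ∑ i ∈ s, p i = 1 := by
    rw [hsdef, Finset.sum_filter_ne_zero]
    exact hp1
  have hdecomp_s : ρ = ∑ i ∈ s, ((p i : ℝ) : ℂ) • outer (u i) (u i) := by
    rw [hdecomp]
    refine (Finset.sum_subset (Finset.filter_subset _ _) ?_).symm
    intro i _ hi
    rw [hmem_s i, not_not] at hi
    rw [hi]
    simp
  have hpos_s : ∀ i ∈ s, 0 < p i := fun i hi =>
    lt_of_le_of_ne (hp0 i) (Ne.symm ((hmem_s i).mp hi))
  have hne : s.Nonempty := by
    by_contra h
    rw [Finset.not_nonempty_iff_eq_empty] at h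
    rw [h, Finset.sum_empty] at hsum_s
    norm_num at hsum_s
  have hBsum : ∑ i ∈ s, p i • trB (outer (u i) (u i)) = ρA := by
    have h0 : trB ρ = ∑ i ∈ s, ((p i : ℝ) : ℂ) • trB (outer (u i) (u i)) := by
      rw [hdecomp_s]
      show trBL _ = _
      rw [map_sum]
      exact Finset.sum_congr rfl fun i _ => by rw [_root_.map_smul]; rfl
    rw [← htB, h0]
    exact Finset.sum_congr rfl fun i _ => by rw [real_smul_mat]
  have hAsum : ∑ i ∈ s, p i • trA (outer (u i) (u i)) = ρB := by
    have h0 : trA ρ = ∑ i ∈ s, ((p i : ℝ) : ℂ) • trA (outer (u i) (u i)) := by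
      rw [hdecomp_s]
      show trAL _ = _
      rw [map_sum]
      exact Finset.sum_congr rfl fun i _ => by rw [_root_.map_smul]; rfl
    rw [← htA, h0]
    exact Finset.sum_congr rfl fun i _ => by rw [real_smul_mat]
  have hBall : ∀ i ∈ s, trB (outer (u i) (u i)) = ρA :=
    extremePoint_finsum convex_DB hA s p _ hpos_s hsum_s
      (fun i hi => outer_mem_DB hP (huS i ((hmem_s i).mp hi)) (hun i)) hBsum
  have hAall : ∀ i ∈ s, trA (outer (u i) (u i)) = ρB :=
    extremePoint_finsum convex_DA hB s p _ hpos_s hsum_s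
      (fun i hi => outer_mem_DA hP (huS i ((hmem_s i).mp hi)) (hun i)) hAsum
  obtain ⟨i₀, hi₀⟩ := hne
  refine ⟨u i₀, huS i₀ ((hmem_s i₀).mp hi₀), hun i₀, ?_⟩
  have hall : ∀ i ∈ s, outer (u i) (u i) = outer (u i₀) (u i₀) := by
    intro i hi
    exact pair_outer_eq hA hB hP (huS i₀ ((hmem_s i₀).mp hi₀)) (huS i ((hmem_s i).mp hi))
      (hun i₀) (hun i) (hBall i₀ hi₀) (hAall i₀ hi₀) (hBall i hi) (hAall i hi)
  rw [hdecomp_s, Finset.sum_congr rfl fun i hi => by rw [hall i hi]]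
  rw [← Finset.sum_smul]
  have : (∑ i ∈ s, ((p i : ℝ) : ℂ)) = 1 := by
    rw [← Complex.ofReal_sum, hsum_s, Complex.ofReal_one]
  rw [this, one_smul]

theorem extreme_pair_unique_pure_preimage'
    (S : Submodule ℂ (m × n → ℂ)) (ρA : Matrix m m ℂ) (ρB : Matrix n n ℂ)
    (hA : ρA ∈ Set.extremePoints ℝ (DB S))
    (hB : ρB ∈ Set.extremePoints ℝ (DA S)) :
    (∀ ρ1 ρ2 : Matrix (m × n) (m × n) ℂ,
        IsDensity ρ1 → SupportedOn S ρ1 → trB ρ1 = ρA → trA ρ1 = ρB →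
        IsDensity ρ2 → SupportedOn S ρ2 → trB ρ2 = ρA → trA ρ2 = ρB → ρ1 = ρ2) ∧
    (∀ ρ : Matrix (m × n) (m × n) ℂ,
        IsDensity ρ → SupportedOn S ρ → trB ρ = ρA → trA ρ = ρB →
        ∃ ψ : m × n → ℂ, ψ ∈ S ∧ (∑ x, ‖ψ x‖ ^ 2) = 1 ∧ ρ = outer ψ ψ) := by
  constructor
  · intro ρ1 ρ2 hd1 hs1 hB1 hA1 hd2 hs2 hB2 hA2
    obtain ⟨ψ1, hψ1S, hψ1n, hψ1e⟩ := pure_preimage hA hB ρ1 hd1 hs1 hB1 hA1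
    obtain ⟨ψ2, hψ2S, hψ2n, hψ2e⟩ := pure_preimage hA hB ρ2 hd2 hs2 hB2 hA2
    obtain ⟨P, hP, -⟩ := hs1
    have h12 : outer ψ2 ψ2 = outer ψ1 ψ1 := by
      refine pair_outer_eq hA hB hP hψ1S hψ2S hψ1n hψ2n ?_ ?_ ?_ ?_
      · rw [← hψ1e]; exact hB1
      · rw [← hψ1e]; exact hA1
      · rw [← hψ2e]; exact hB2
      · rw [← hψ2e]; exact hA2
    rw [hψ1e, hψ2e, h12]
  · exact fun ρ hd hs htB htA => pure_preimage hA hB ρ hd hs htB htA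

end Assembly


theorem extreme_pair_unique_pure_preimage
    {m n : Type*} [Fintype m] [Fintype n] [DecidableEq m] [DecidableEq n]
    (S : Submodule ℂ (m × n → ℂ)) (ρA : Matrix m m ℂ) (ρB : Matrix n n ℂ)
    (hA : ρA ∈ Set.extremePoints ℝ (DB S))
    (hB : ρB ∈ Set.extremePoints ℝ (DA S)) :
    (∀ ρ1 ρ2 : Matrix (m × n) (m × n) ℂ,
        IsDensity ρ1 → SupportedOn S ρ1 → trB ρ1 = ρA → trA ρ1 = ρB →
        IsDensity ρ2 → SupportedOn S ρ2 → trB ρ2 = ρA → trA ρ2 = ρB → ρ1 = ρ2) ∧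
    (∀ ρ : Matrix (m × n) (m × n) ℂ,
        IsDensity ρ → SupportedOn S ρ → trB ρ = ρA → trA ρ = ρB →
        ∃ ψ : m × n → ℂ, ψ ∈ S ∧ (∑ x, ‖ψ x‖ ^ 2) = 1 ∧ ρ = outer ψ ψ) :=
  extreme_pair_unique_pure_preimage' S ρA ρB hA hB

end
end

section
/- Let G be a ℂ-submodule of (m × n → ℂ) and ρA a fixed matrix such that trB |ψ⟩⟨ψ| = ρA for every unit vector ψ ∈ G. Then for any two vectors ψ1, ψ2 ∈ G that are orthogonal (∑ x, conj (ψ1 x) * ψ2 x = 0), the transition reduced matrix vanishes: trB |ψ1⟩⟨ψ2| = 0. -/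
open scoped ComplexOrder

noncomputable section

/-! ### Auxiliary lemmas -/

lemma trB_outer_smul {m n : Type*} [Fintype n] (c d : ℂ) (ψ φ : m × n → ℂ) :
    trB (outer (c • ψ) (d • φ)) = (c * (starRingEnd ℂ) d) • trB (outer ψ φ) := by
  ext i i'
  simp only [trB, outer, Matrix.of_apply, Matrix.smul_apply, Pi.smul_apply, smul_eq_mul,
    map_mul, Finset.mul_sum]
  exact Finset.sum_congr rfl fun j _ => by ring

lemma trB_outer_expand {m n : Type*} [Fintype n] (a b : ℂ) (ψ φ : m × n → ℂ) :
    trB (outer (a • ψ + b • φ) (a • ψ + b • φ))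
      = (a * (starRingEnd ℂ) a) • trB (outer ψ ψ) + (a * (starRingEnd ℂ) b) • trB (outer ψ φ)
        + (b * (starRingEnd ℂ) a) • trB (outer φ ψ)
        + (b * (starRingEnd ℂ) b) • trB (outer φ φ) := by
  ext i i'
  simp only [trB, outer, Matrix.of_apply, Matrix.add_apply, Matrix.smul_apply, Pi.add_apply,
    Pi.smul_apply, smul_eq_mul, map_add, map_mul, Finset.mul_sum, ← Finset.sum_add_distrib]
  exact Finset.sum_congr rfl fun j _ => by ring

lemma inner_self_cast {k : Type*} [Fintype k] (ψ : k → ℂ) :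
    ∑ x, (starRingEnd ℂ) (ψ x) * ψ x = ((∑ x, ‖ψ x‖ ^ 2 : ℝ) : ℂ) := by
  push_cast
  refine Finset.sum_congr rfl fun x _ => ?_
  rw [← Complex.normSq_eq_conj_mul_self, Complex.normSq_eq_norm_sq]
  push_cast
  ring

lemma inner_expand {k : Type*} [Fintype k] (a b : ℂ) (ψ φ : k → ℂ) :
    ∑ x, (starRingEnd ℂ) ((a • ψ + b • φ) x) * ((a • ψ + b • φ) x)
      = (starRingEnd ℂ) a * a * (∑ x, (starRingEnd ℂ) (ψ x) * ψ x)
        + (starRingEnd ℂ) a * b * (∑ x, (starRingEnd ℂ) (ψ x) * φ x)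
        + (starRingEnd ℂ) b * a * (∑ x, (starRingEnd ℂ) (φ x) * ψ x)
        + (starRingEnd ℂ) b * b * (∑ x, (starRingEnd ℂ) (φ x) * φ x) := by
  simp only [Pi.add_apply, Pi.smul_apply, smul_eq_mul, map_add, map_mul, Finset.mul_sum,
    ← Finset.sum_add_distrib]
  exact Finset.sum_congr rfl fun x _ => by ring

/-- Core case: unit vectors. -/
lemma core_unit {m n : Type*} [Fintype m] [Fintype n]
    (G : Submodule ℂ (m × n → ℂ)) (ρA : Matrix m m ℂ)
    (hG : ∀ ψ : m × n → ℂ, ψ ∈ G → (∑ x, ‖ψ x‖ ^ 2) = 1 → trB (outer ψ ψ) = ρA)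
    (u v : m × n → ℂ) (hu : u ∈ G) (hv : v ∈ G)
    (hnu : (∑ x, ‖u x‖ ^ 2) = 1) (hnv : (∑ x, ‖v x‖ ^ 2) = 1)
    (ho : ∑ x, (starRingEnd ℂ) (u x) * v x = 0) :
    trB (outer u v) = 0 := by
  have hiu : ∑ x, (starRingEnd ℂ) (u x) * u x = 1 := by
    rw [inner_self_cast, hnu]; norm_num
  have hiv : ∑ x, (starRingEnd ℂ) (v x) * v x = 1 := by
    rw [inner_self_cast, hnv]; norm_num
  have ho' : ∑ x, (starRingEnd ℂ) (v x) * u x = 0 := by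
    have := congrArg (starRingEnd ℂ) ho
    simpa [map_sum, mul_comm] using this
  set c : ℂ := (((Real.sqrt 2)⁻¹ : ℝ) : ℂ) with hc
  have hcconj : (starRingEnd ℂ) c = c := Complex.conj_ofReal _
  have hcc : c * c = (1 / 2 : ℂ) := by
    rw [hc, ← Complex.ofReal_mul, ← mul_inv, Real.mul_self_sqrt (by norm_num : (0:ℝ) ≤ 2)]
    push_cast
    norm_num
  have norm_of_inner : ∀ ψ : m × n → ℂ, (∑ x, (starRingEnd ℂ) (ψ x) * ψ x) = 1 →
      (∑ x, ‖ψ x‖ ^ 2) = 1 := by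
    intro ψ h
    rw [inner_self_cast] at h
    exact_mod_cast h
  have huu : trB (outer u u) = ρA := hG u hu hnu
  have hvv : trB (outer v v) = ρA := hG v hv hnv
  set T := trB (outer u v) with hT
  set T' := trB (outer v u) with hT'
  have probe : ∀ b : ℂ, b * (starRingEnd ℂ) b = 1 →
      ((1:ℂ)/2) • ρA + (((1:ℂ)/2) * (starRingEnd ℂ) b) • T + (((1:ℂ)/2) * b) • T'
        + ((1:ℂ)/2) • ρA = ρA := by
    intro b hb
    have hw : (c • u + (c * b) • v) ∈ G :=
      G.add_mem (G.smul_mem _ hu) (G.smul_mem _ hv)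
    have hwn : (∑ x, ‖(c • u + (c * b) • v) x‖ ^ 2) = 1 := by
      apply norm_of_inner
      rw [inner_expand, hiu, hiv, ho, ho']
      simp only [map_mul, hcconj, mul_zero, mul_one, add_zero, zero_add]
      linear_combination (1 + b * (starRingEnd ℂ) b) * hcc + (1/2 : ℂ) * hb
    have hkey := hG _ hw hwn
    rw [trB_outer_expand, huu, hvv] at hkey
    have c1 : c * (starRingEnd ℂ) c = (1/2 : ℂ) := by rw [hcconj]; exact hcc
    have c2 : c * (starRingEnd ℂ) (c * b) = ((1:ℂ)/2) * (starRingEnd ℂ) b := by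
      rw [map_mul, hcconj, ← hcc]; ring
    have c3 : c * b * (starRingEnd ℂ) c = ((1:ℂ)/2) * b := by
      rw [hcconj, ← hcc]; ring
    have c4 : c * b * (starRingEnd ℂ) (c * b) = ((1:ℂ)/2) * (b * (starRingEnd ℂ) b) := by
      rw [map_mul, hcconj, ← hcc]; ring
    rw [c1, c2, c3, c4, hb, mul_one] at hkey
    exact hkey
  have e1 := probe 1 (by norm_num)
  simp only [map_one, mul_one] at e1
  have hIunit : Complex.I * (starRingEnd ℂ) Complex.I = 1 := by
    rw [Complex.conj_I]
    simp [Complex.I_mul_I]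
  have e2 := probe Complex.I hIunit
  rw [Complex.conj_I] at e2
  have k1' : T + T' = 0 := by
    linear_combination (norm := module) (2:ℂ) • e1
  have k2' : T' = T := by
    linear_combination (norm := module) (-(2:ℂ) * Complex.I) • e2 + Complex.I_mul_I • (T' - T)
  rw [k2'] at k1'
  have : (2:ℂ) • T = 0 := by
    rw [two_smul]; exact k1'
  simpa using (smul_eq_zero.mp this).resolve_left (by norm_num)

theorem transition_rdm_vanishes
    {m n : Type*} [Fintype m] [Fintype n] [DecidableEq m] [DecidableEq n]
    (G : Submodule ℂ (m × n → ℂ)) (ρA : Matrix m m ℂ)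
    (hG : ∀ ψ : m × n → ℂ, ψ ∈ G → (∑ x, ‖ψ x‖ ^ 2) = 1 → trB (outer ψ ψ) = ρA)
    (ψ1 ψ2 : m × n → ℂ) (h1 : ψ1 ∈ G) (h2 : ψ2 ∈ G)
    (horth : ∑ x, (starRingEnd ℂ) (ψ1 x) * ψ2 x = 0) :
    trB (outer ψ1 ψ2) = 0 := by
  by_cases hz1 : ∀ x, ψ1 x = 0
  · ext i i'; simp [trB, outer, hz1]
  by_cases hz2 : ∀ x, ψ2 x = 0
  · ext i i'; simp [trB, outer, hz2]
  -- both nonzero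
  have hpos1 : 0 < ∑ x, ‖ψ1 x‖ ^ 2 := by
    push_neg at hz1
    obtain ⟨x, hx⟩ := hz1
    exact Finset.sum_pos' (fun y _ => by positivity)
      ⟨x, Finset.mem_univ x, pow_pos (norm_pos_iff.mpr hx) 2⟩
  have hpos2 : 0 < ∑ x, ‖ψ2 x‖ ^ 2 := by
    push_neg at hz2
    obtain ⟨x, hx⟩ := hz2
    exact Finset.sum_pos' (fun y _ => by positivity)
      ⟨x, Finset.mem_univ x, pow_pos (norm_pos_iff.mpr hx) 2⟩
  set a : ℝ := Real.sqrt (∑ x, ‖ψ1 x‖ ^ 2) with ha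
  set b : ℝ := Real.sqrt (∑ x, ‖ψ2 x‖ ^ 2) with hb
  have hapos : 0 < a := Real.sqrt_pos.mpr hpos1
  have hbpos : 0 < b := Real.sqrt_pos.mpr hpos2
  set u : m × n → ℂ := ((a⁻¹ : ℝ) : ℂ) • ψ1 with hu
  set v : m × n → ℂ := ((b⁻¹ : ℝ) : ℂ) • ψ2 with hv
  have hnorm : ∀ (ψ : m × n → ℂ) (r : ℝ), 0 < r →
      ∑ x, ‖(((r⁻¹ : ℝ) : ℂ) • ψ) x‖ ^ 2 = r⁻¹ ^ 2 * ∑ x, ‖ψ x‖ ^ 2 := by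
    intro ψ r hr
    rw [Finset.mul_sum]
    refine Finset.sum_congr rfl fun x _ => ?_
    simp [norm_smul, mul_pow, abs_of_pos (inv_pos.mpr hr)]
  have hnu : ∑ x, ‖u x‖ ^ 2 = 1 := by
    rw [hu, hnorm ψ1 a hapos, ha, inv_pow, Real.sq_sqrt hpos1.le,
      inv_mul_cancel₀ hpos1.ne']
  have hnv : ∑ x, ‖v x‖ ^ 2 = 1 := by
    rw [hv, hnorm ψ2 b hbpos, hb, inv_pow, Real.sq_sqrt hpos2.le,
      inv_mul_cancel₀ hpos2.ne']
  have hum : u ∈ G := G.smul_mem _ h1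
  have hvm : v ∈ G := G.smul_mem _ h2
  have ho : ∑ x, (starRingEnd ℂ) (u x) * v x = 0 := by
    rw [hu, hv]
    simp only [Pi.smul_apply, smul_eq_mul, map_mul, Complex.conj_ofReal]
    have : ∀ x, ((a⁻¹ : ℝ) : ℂ) * (starRingEnd ℂ) (ψ1 x) * (((b⁻¹ : ℝ) : ℂ) * ψ2 x)
        = (((a⁻¹ : ℝ) : ℂ) * ((b⁻¹ : ℝ) : ℂ)) * ((starRingEnd ℂ) (ψ1 x) * ψ2 x) := by
      intro x; ring
    simp only [this, ← Finset.mul_sum, horth, mul_zero]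
  have key := core_unit G ρA hG u v hum hvm hnu hnv ho
  have hψ1 : ψ1 = ((a : ℝ) : ℂ) • u := by
    rw [hu, smul_smul, ← Complex.ofReal_mul, mul_inv_cancel₀ hapos.ne']
    simp
  have hψ2 : ψ2 = ((b : ℝ) : ℂ) • v := by
    rw [hv, smul_smul, ← Complex.ofReal_mul, mul_inv_cancel₀ hbpos.ne']
    simp
  rw [hψ1, hψ2, trB_outer_smul, key, smul_zero]

end
end

section
/- Let G be a ℂ-submodule of (m × n → ℂ) and ρA a fixed matrix such that trB |ψ⟩⟨ψ| = ρA for every unit vector ψ ∈ G. Then for any two orthogonal unit vectors ψj, ψk ∈ G, the reduced density matrices on the second factor have orthogonal ranges: (trA |ψj⟩⟨ψj|) * (trA |ψk⟩⟨ψk|) = 0. -/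
open scoped ComplexOrder

noncomputable section

private lemma unit_iff' {k : Type*} [Fintype k] (ψ : k → ℂ) :
    (∑ x, ‖ψ x‖ ^ 2) = 1 ↔ ∑ x, (starRingEnd ℂ) (ψ x) * ψ x = 1 := by
  have h : ∑ x, (starRingEnd ℂ) (ψ x) * ψ x = ((∑ x, ‖ψ x‖ ^ 2 : ℝ) : ℂ) := by
    push_cast
    exact Finset.sum_congr rfl fun x _ => by rw [Complex.conj_mul']
  rw [h]
  norm_cast

private lemma aux_trB_cross_zero
    {m n : Type*} [Fintype m] [Fintype n]
    (G : Submodule ℂ (m × n → ℂ)) (ρA : Matrix m m ℂ)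
    (hG : ∀ ψ : m × n → ℂ, ψ ∈ G → (∑ x, ‖ψ x‖ ^ 2) = 1 → trB (outer ψ ψ) = ρA)
    (ψj ψk : m × n → ℂ) (hj : ψj ∈ G) (hk : ψk ∈ G)
    (huj : (∑ x, ‖ψj x‖ ^ 2) = 1) (huk : (∑ x, ‖ψk x‖ ^ 2) = 1)
    (horth : ∑ x, (starRingEnd ℂ) (ψj x) * ψk x = 0) :
    ∀ a a', ∑ b, ψj (a, b) * (starRingEnd ℂ) (ψk (a', b)) = 0 := by
  have horth' : ∑ x, (starRingEnd ℂ) (ψk x) * ψj x = 0 := by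
    have := congrArg (starRingEnd ℂ) horth
    simpa [map_sum, mul_comm] using this
  set c : ℂ := ((Real.sqrt 2 : ℝ) : ℂ)⁻¹ with hc
  have hcc : (starRingEnd ℂ) c * c = (2 : ℂ)⁻¹ := by
    rw [hc]
    rw [map_inv₀, Complex.conj_ofReal, ← mul_inv]
    rw [show ((Real.sqrt 2 :ℝ):ℂ) * ((Real.sqrt 2:ℝ):ℂ) = ((Real.sqrt 2 * Real.sqrt 2 : ℝ):ℂ) by push_cast; ring,
      Real.mul_self_sqrt (by norm_num)]
    norm_num
  have hC : ∀ (u : ℂ), ‖u‖ = 1 → (c • (ψj + u • ψk)) ∈ G ∧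
      (∑ x, ‖(c • (ψj + u • ψk)) x‖ ^ 2) = 1 := by
    intro u hu
    refine ⟨Submodule.smul_mem _ _ (Submodule.add_mem _ hj (Submodule.smul_mem _ _ hk)), ?_⟩
    rw [unit_iff']
    have huu : (starRingEnd ℂ) u * u = 1 := by
      rw [Complex.conj_mul', hu]; norm_num
    have expand : ∀ x, (starRingEnd ℂ) ((c • (ψj + u • ψk)) x) * (c • (ψj + u • ψk)) x
        = ((starRingEnd ℂ) c * c) * ((starRingEnd ℂ) (ψj x) * ψj x
          + u * ((starRingEnd ℂ) (ψj x) * ψk x)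
          + (starRingEnd ℂ) u * ((starRingEnd ℂ) (ψk x) * ψj x)
          + ((starRingEnd ℂ) u * u) * ((starRingEnd ℂ) (ψk x) * ψk x)) := by
      intro x
      simp only [Pi.smul_apply, Pi.add_apply, smul_eq_mul, map_mul, map_add]
      ring
    rw [Finset.sum_congr rfl fun x _ => expand x]
    rw [← Finset.mul_sum]
    simp only [Finset.sum_add_distrib, ← Finset.mul_sum]
    rw [horth, horth', (unit_iff' ψj).mp huj, (unit_iff' ψk).mp huk, huu, hcc]
    ring
  have hjj := hG ψj hj huj
  have hkk := hG ψk hk huk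
  have key : ∀ (u : ℂ), ‖u‖ = 1 → ∀ a a',
      (starRingEnd ℂ) u * (∑ b, ψj (a, b) * (starRingEnd ℂ) (ψk (a', b)))
      + u * (∑ b, ψk (a, b) * (starRingEnd ℂ) (ψj (a', b))) = 0 := by
    intro u hu a a'
    obtain ⟨hmem, hnorm⟩ := hC u hu
    have heq := hG _ hmem hnorm
    have h1 := congrFun (congrFun heq a) a'
    have h2 := congrFun (congrFun hjj a) a'
    have h3 := congrFun (congrFun hkk a) a'
    have huu : (starRingEnd ℂ) u * u = 1 := by
      rw [Complex.conj_mul', hu]; norm_num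
    simp only [trB, outer, Matrix.of_apply, Pi.smul_apply, Pi.add_apply, smul_eq_mul,
      map_mul, map_add] at h1 h2 h3
    have expand : ∀ b, (c * (ψj (a, b) + u * ψk (a, b))) *
        ((starRingEnd ℂ) c * ((starRingEnd ℂ) (ψj (a', b)) + (starRingEnd ℂ) u * (starRingEnd ℂ) (ψk (a', b))))
        = ((starRingEnd ℂ) c * c) * ((ψj (a, b) * (starRingEnd ℂ) (ψj (a', b)))
          + (starRingEnd ℂ) u * (ψj (a, b) * (starRingEnd ℂ) (ψk (a', b)))
          + u * (ψk (a, b) * (starRingEnd ℂ) (ψj (a', b)))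
          + ((starRingEnd ℂ) u * u) * (ψk (a, b) * (starRingEnd ℂ) (ψk (a', b)))) := by
      intro b; ring
    rw [Finset.sum_congr rfl fun b _ => expand b, ← Finset.mul_sum] at h1
    simp only [Finset.sum_add_distrib, ← Finset.mul_sum] at h1
    rw [h2, h3, huu, hcc, one_mul] at h1
    have : (2:ℂ)⁻¹ * ((starRingEnd ℂ) u * (∑ b, ψj (a, b) * (starRingEnd ℂ) (ψk (a', b)))
      + u * (∑ b, ψk (a, b) * (starRingEnd ℂ) (ψj (a', b)))) = 0 := by
      linear_combination h1
    have h2ne : (2:ℂ)⁻¹ ≠ 0 := by norm_num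
    exact (mul_eq_zero.mp this).resolve_left h2ne
  intro a a'
  have k1 := key 1 (by norm_num) a a'
  have k2 := key Complex.I (by simp) a a'
  simp only [map_one, one_mul, Complex.conj_I] at k1 k2
  have h4 : (∑ b, ψk (a, b) * (starRingEnd ℂ) (ψj (a', b)))
      - ∑ b, ψj (a, b) * (starRingEnd ℂ) (ψk (a', b)) = 0 := by
    have hI : Complex.I * ((∑ b, ψk (a, b) * (starRingEnd ℂ) (ψj (a', b)))
        - ∑ b, ψj (a, b) * (starRingEnd ℂ) (ψk (a', b))) = 0 := by linear_combination k2
    exact (mul_eq_zero.mp hI).resolve_left Complex.I_ne_zero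
  linear_combination (k1 - h4) / 2



theorem complementary_rdms_orthogonal_ranges
    {m n : Type*} [Fintype m] [Fintype n] [DecidableEq m] [DecidableEq n]
    (G : Submodule ℂ (m × n → ℂ)) (ρA : Matrix m m ℂ)
    (hG : ∀ ψ : m × n → ℂ, ψ ∈ G → (∑ x, ‖ψ x‖ ^ 2) = 1 → trB (outer ψ ψ) = ρA)
    (ψj ψk : m × n → ℂ) (hj : ψj ∈ G) (hk : ψk ∈ G)
    (huj : (∑ x, ‖ψj x‖ ^ 2) = 1) (huk : (∑ x, ‖ψk x‖ ^ 2) = 1)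
    (horth : ∑ x, (starRingEnd ℂ) (ψj x) * ψk x = 0) :
    trA (outer ψj ψj) * trA (outer ψk ψk) = 0 := by
  have key := aux_trB_cross_zero G ρA hG ψj ψk hj hk huj huk horth
  ext b b''
  simp only [Matrix.mul_apply, trA, outer, Matrix.of_apply, Matrix.zero_apply]
  rw [Finset.sum_congr rfl fun b' _ => Finset.sum_mul_sum Finset.univ Finset.univ
    (fun a => ψj (a, b) * (starRingEnd ℂ) (ψj (a, b')))
    (fun a' => ψk (a', b') * (starRingEnd ℂ) (ψk (a', b'')))]
  rw [Finset.sum_comm]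
  apply Finset.sum_eq_zero
  intro a _
  rw [Finset.sum_comm]
  apply Finset.sum_eq_zero
  intro a' _
  have h0 : ∑ b', ψj (a, b') * (starRingEnd ℂ) (ψk (a', b')) = 0 := key a a'
  have h0' : ∑ b', (starRingEnd ℂ) (ψj (a, b')) * ψk (a', b') = 0 := by
    have := congrArg (starRingEnd ℂ) h0
    simpa [map_sum, mul_comm] using this
  calc ∑ b', (ψj (a, b) * (starRingEnd ℂ) (ψj (a, b'))) *
        (ψk (a', b') * (starRingEnd ℂ) (ψk (a', b'')))
      = (ψj (a, b) * (starRingEnd ℂ) (ψk (a', b''))) *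
        ∑ b', (starRingEnd ℂ) (ψj (a, b')) * ψk (a', b') := by
        rw [Finset.mul_sum]; exact Finset.sum_congr rfl fun b' _ => by ring
    _ = 0 := by rw [h0', mul_zero]


end
end

section
/- Let S be a ℂ-submodule of (m × n → ℂ) and suppose there exists a nonzero Hermitian matrix T supported on S with trB T = 0. Let ρ be a density matrix supported on S whose rank equals the dimension of S (i.e., ρ has full rank on S). Then there exist two distinct density matrices ρ1 ≠ ρ2, both supported on S, both of rank strictly less than dim S, such that trB ρ1 = trB ρ2 = trB ρ. -/
open scoped ComplexOrder

noncomputable section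

open Matrix

namespace Aux

variable {k : Type*} [Fintype k] [DecidableEq k]

lemma add_eq_zero_of_nonneg {a b : ℂ} (ha : 0 ≤ a) (hb : 0 ≤ b) (h : a + b = 0) :
    a = 0 ∧ b = 0 := by
  constructor
  · exact le_antisymm (by calc a ≤ a + b := le_add_of_nonneg_right hb
                          _ = 0 := h) ha
  · exact le_antisymm (by calc b ≤ a + b := le_add_of_nonneg_left ha
                          _ = 0 := h) hb

lemma ext_mulVec {M N : Matrix k k ℂ} (h : ∀ x, M *ᵥ x = N *ᵥ x) : M = N := by
  ext i j
  simpa [Matrix.mulVec_single] using congrFun (h (Pi.single j 1)) i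

lemma proj_unique {S : Submodule ℂ (k → ℂ)} {P Q : Matrix k k ℂ}
    (hP : IsOrthProjOnto S P) (hQ : IsOrthProjOnto S Q) : P = Q := by
  have hQP : Q * P = P := ext_mulVec fun x => by
    rw [← Matrix.mulVec_mulVec]
    exact hQ.2.2.2 _ (hP.2.2.1 x)
  have hPQ : P * Q = Q := ext_mulVec fun x => by
    rw [← Matrix.mulVec_mulVec]
    exact hP.2.2.2 _ (hQ.2.2.1 x)
  calc P = (Q * P)ᴴ := by rw [hQP, hP.1]
  _ = Pᴴ * Qᴴ := by rw [Matrix.conjTranspose_mul]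
  _ = P * Q := by rw [hP.1, hQ.1]
  _ = Q := hPQ

lemma rank_lt_of_kernel {S : Submodule ℂ (k → ℂ)} {P M : Matrix k k ℂ}
    (hP : IsOrthProjOnto S P) (hM : P * M * P = M) {v : k → ℂ} (hv : v ≠ 0)
    (hvS : v ∈ S) (hMv : M *ᵥ v = 0) : M.rank < Module.finrank ℂ S := by
  classical
  have hMP : M * P = M := by
    conv_lhs => rw [← hM]
    rw [Matrix.mul_assoc, Matrix.mul_assoc, hP.2.1, ← Matrix.mul_assoc]
    exact hM
  have hrangeP : LinearMap.range P.mulVecLin = S := by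
    apply le_antisymm
    · rintro _ ⟨x, rfl⟩
      exact hP.2.2.1 x
    · intro y hy
      exact ⟨y, hP.2.2.2 y hy⟩
  set W := LinearMap.ker P.mulVecLin with hW
  set K := LinearMap.ker M.mulVecLin with hK
  have hWK : W ≤ K := by
    intro x hx
    have hx' : P *ᵥ x = 0 := hx
    have : M *ᵥ x = 0 := by
      rw [← hMP, ← Matrix.mulVec_mulVec, hx', Matrix.mulVec_zero]
    exact this
  have hvK : v ∈ K := hMv
  have hvW : v ∉ W := by
    intro hx
    have hx' : P *ᵥ v = 0 := hx
    rw [hP.2.2.2 v hvS] at hx'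
    exact hv hx'
  have hsup : W ⊔ Submodule.span ℂ {v} ≤ K := by
    refine sup_le hWK ?_
    rw [Submodule.span_le, Set.singleton_subset_iff]
    exact hvK
  have hdisj : W ⊓ Submodule.span ℂ {v} = ⊥ := by
    rw [eq_bot_iff]
    rintro x ⟨hxW, hxs⟩
    obtain ⟨c, rfl⟩ := Submodule.mem_span_singleton.mp hxs
    have hx' : P *ᵥ (c • v) = 0 := hxW
    rw [Matrix.mulVec_smul, hP.2.2.2 v hvS] at hx'
    simp only [Submodule.mem_bot]
    exact hx'
  have hdim1 : Module.finrank ℂ (W ⊔ Submodule.span ℂ {v} : Submodule ℂ (k → ℂ))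
      = Module.finrank ℂ W + 1 := by
    have := Submodule.finrank_sup_add_finrank_inf_eq W (Submodule.span ℂ {v})
    rw [hdisj, finrank_bot, add_zero, finrank_span_singleton hv] at this
    exact this
  have hKge : Module.finrank ℂ W + 1 ≤ Module.finrank ℂ K := by
    rw [← hdim1]
    exact Submodule.finrank_mono hsup
  have h1 : M.rank + Module.finrank ℂ K = Module.finrank ℂ (k → ℂ) :=
    LinearMap.finrank_range_add_finrank_ker M.mulVecLin
  have h2 : Module.finrank ℂ S + Module.finrank ℂ W = Module.finrank ℂ (k → ℂ) := by
    rw [← hrangeP]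
    exact LinearMap.finrank_range_add_finrank_ker P.mulVecLin
  omega

lemma trace_eq_sum_eigenvalues {B : Matrix k k ℂ} (hB : B.IsHermitian) :
    B.trace = ∑ i, (hB.eigenvalues i : ℂ) := by
  conv_lhs => rw [hB.spectral_theorem, Unitary.conjStarAlgAut_apply]
  rw [Matrix.trace_mul_cycle]
  rw [show (star hB.eigenvectorUnitary : Matrix k k ℂ) * hB.eigenvectorUnitary = 1 from
    Unitary.coe_star_mul_self _]
  rw [Matrix.one_mul, Matrix.trace_diagonal]
  rfl

lemma eigenvector_ne_zero {B : Matrix k k ℂ} (hB : B.IsHermitian) (i : k) :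
    (⇑(hB.eigenvectorBasis i) : k → ℂ) ≠ 0 := by
  intro h
  exact hB.eigenvectorBasis.orthonormal.ne_zero i
    ((WithLp.equiv 2 _).injective (by simpa using h))

lemma quadratic_eigen {B : Matrix k k ℂ} (hB : B.IsHermitian) (i : k) :
    star (⇑(hB.eigenvectorBasis i) : k → ℂ) ⬝ᵥ B *ᵥ (⇑(hB.eigenvectorBasis i) : k → ℂ)
      = (hB.eigenvalues i : ℂ) *
        (star (⇑(hB.eigenvectorBasis i) : k → ℂ) ⬝ᵥ (⇑(hB.eigenvectorBasis i) : k → ℂ)) := by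
  rw [hB.mulVec_eigenvectorBasis]
  rw [show ((hB.eigenvalues i : ℝ) • (⇑(hB.eigenvectorBasis i) : k → ℂ))
      = (hB.eigenvalues i : ℂ) • (⇑(hB.eigenvectorBasis i) : k → ℂ) by
    ext x; simp [Complex.real_smul]]
  rw [dotProduct_smul, smul_eq_mul]

lemma dotProduct_star_self_pos' {w : k → ℂ} (hw : w ≠ 0) : 0 < star w ⬝ᵥ w := by
  rcases lt_or_eq_of_le (dotProduct_star_self_nonneg w) with h | h
  · exact h
  · exact absurd (dotProduct_star_self_eq_zero.mp h.symm) hw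

lemma exists_pos_t {B : Matrix k k ℂ} (hB : B.IsHermitian)
    (hx : ∃ x : k → ℂ, star x ⬝ᵥ B *ᵥ x < 0) :
    ∃ t : ℝ, 0 < t ∧ (1 + (t : ℂ) • B).PosSemidef ∧
      ∃ w : k → ℂ, w ≠ 0 ∧ (1 + (t : ℂ) • B) *ᵥ w = 0 := by
  obtain ⟨x, hxneg⟩ := hx
  have hk : Nonempty k := by
    by_contra h
    rw [not_nonempty_iff] at h
    rw [show x = 0 from funext fun i => (h.false i).elim] at hxneg
    simp at hxneg
  set μ := hB.eigenvalues with hμdef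
  obtain ⟨i0, -, hmin⟩ :=
    Finset.exists_min_image Finset.univ μ ⟨Classical.arbitrary k, Finset.mem_univ _⟩
  have hμ0 : μ i0 < 0 := by
    by_contra h
    push_neg at h
    have hPSD : B.PosSemidef :=
      hB.posSemidef_iff_eigenvalues_nonneg.mpr fun i => h.trans (hmin i (Finset.mem_univ _))
    exact absurd (hxneg.trans_le (hPSD.dotProduct_mulVec_nonneg x)) (lt_irrefl _)
  set t : ℝ := -(μ i0)⁻¹ with htdef
  have ht : 0 < t := neg_pos.mpr (inv_lt_zero.mpr hμ0)
  set V : Matrix k k ℂ := (hB.eigenvectorUnitary : Matrix k k ℂ) with hVdef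
  have hstar : (star hB.eigenvectorUnitary : Matrix k k ℂ) = Vᴴ := rfl
  have hD' : Matrix.diagonal (fun i => ((1 + t * μ i : ℝ) : ℂ))
      = 1 + (t : ℂ) • Matrix.diagonal (RCLike.ofReal ∘ μ) := by
    ext i j
    by_cases hij : i = j
    · subst hij
      simp only [Matrix.diagonal_apply_eq, Matrix.add_apply, Matrix.one_apply_eq,
        Matrix.smul_apply, Function.comp_apply, smul_eq_mul]
      push_cast
      simp [RCLike.ofReal_alg]
    · simp [Matrix.diagonal_apply_ne _ hij, Matrix.one_apply_ne hij]
  have hsand : 1 + (t : ℂ) • B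
      = V * Matrix.diagonal (fun i => ((1 + t * μ i : ℝ) : ℂ)) * Vᴴ := by
    rw [hD', Matrix.mul_add, Matrix.add_mul, Matrix.mul_one, Matrix.mul_smul, Matrix.smul_mul]
    rw [show V * Vᴴ = 1 from Unitary.coe_mul_star_self _]
    congr 1
    rw [← hstar, hVdef, ← Unitary.conjStarAlgAut_apply (S := ℂ), ← hB.spectral_theorem]
  have hnonneg : ∀ i, (0 : ℂ) ≤ ((1 + t * μ i : ℝ) : ℂ) := by
    intro i
    rw [Complex.zero_le_real, htdef]
    have hinv : (μ i0)⁻¹ ≤ 0 := le_of_lt (inv_lt_zero.mpr hμ0)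
    have hkey : (μ i0)⁻¹ * (μ i - μ i0) ≤ 0 :=
      mul_nonpos_of_nonpos_of_nonneg hinv (sub_nonneg.mpr (hmin i (Finset.mem_univ _)))
    have hcancel : (μ i0)⁻¹ * μ i0 = 1 := inv_mul_cancel₀ hμ0.ne
    nlinarith [hkey, hcancel]
  refine ⟨t, ht, ?_, ⇑(hB.eigenvectorBasis i0), eigenvector_ne_zero hB i0, ?_⟩
  · rw [hsand]
    exact (Matrix.posSemidef_diagonal_iff.mpr hnonneg).mul_mul_conjTranspose_same V
  · rw [Matrix.add_mulVec, Matrix.one_mulVec, Matrix.smul_mulVec,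
      hB.mulVec_eigenvectorBasis]
    have h1 : ((μ i0 : ℝ) • (⇑(hB.eigenvectorBasis i0) : k → ℂ))
        = ((μ i0 : ℂ)) • (⇑(hB.eigenvectorBasis i0) : k → ℂ) := by
      ext a; simp [Complex.real_smul]
    rw [h1, smul_smul]
    have h2 : (t : ℂ) * (μ i0 : ℂ) = -1 := by
      rw [← Complex.ofReal_mul,
        show t * μ i0 = -1 by rw [htdef, neg_mul, inv_mul_cancel₀ hμ0.ne],
        Complex.ofReal_neg, Complex.ofReal_one]
    rw [h2]
    simp

end Aux

theorem full_rank_state_has_two_boundary_preimages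
    {m n : Type*} [Fintype m] [Fintype n] [DecidableEq m] [DecidableEq n]
    (S : Submodule ℂ (m × n → ℂ))
    (T : Matrix (m × n) (m × n) ℂ) (hT0 : T ≠ 0) (hTH : T.IsHermitian)
    (hTS : SupportedOn S T) (hTtr : trB T = 0)
    (ρ : Matrix (m × n) (m × n) ℂ) (hρ : IsDensity ρ) (hρS : SupportedOn S ρ)
    (hρrank : ρ.rank = Module.finrank ℂ S) :
    ∃ ρ1 ρ2 : Matrix (m × n) (m × n) ℂ, ρ1 ≠ ρ2 ∧
      IsDensity ρ1 ∧ SupportedOn S ρ1 ∧ IsDensity ρ2 ∧ SupportedOn S ρ2 ∧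
      ρ1.rank < Module.finrank ℂ S ∧ ρ2.rank < Module.finrank ℂ S ∧
      trB ρ1 = trB ρ ∧ trB ρ2 = trB ρ := by
  classical
  obtain ⟨P, hPproj, hPT⟩ := hTS
  obtain ⟨P', hP'proj, hPρ⟩ := hρS
  rw [Aux.proj_unique hP'proj hPproj] at hPρ
  have hPH := hPproj.1
  have hPP := hPproj.2.1
  have hTrow : ∀ i i', ∑ j, T (i, j) (i', j) = 0 := by
    intro i i'
    have h := Matrix.ext_iff.mpr hTtr i i'
    simpa [trB] using h
  have htrT : T.trace = 0 := by
    have h : T.trace = ∑ i, ∑ j, T (i, j) (i, j) := by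
      rw [show T.trace = ∑ p : m × n, T p p from rfl, Fintype.sum_prod_type]
    rw [h]
    exact Finset.sum_eq_zero fun i _ => hTrow i i
  have htrB : ∀ c : ℂ, trB (ρ + c • T) = trB ρ := by
    intro c
    ext i i'
    simp only [trB, Matrix.of_apply, Matrix.add_apply, Matrix.smul_apply, smul_eq_mul]
    rw [Finset.sum_add_distrib, ← Finset.mul_sum, hTrow, mul_zero, add_zero]
  set Q : Matrix (m × n) (m × n) ℂ := 1 - P with hQdef
  have hQH : Q.IsHermitian := by
    show Qᴴ = Q
    rw [hQdef, Matrix.conjTranspose_sub, Matrix.conjTranspose_one, hPH.eq]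
  have hQQ : Qᴴ * Q = Q := by
    rw [hQH.eq, hQdef, Matrix.sub_mul, Matrix.one_mul, Matrix.mul_sub, Matrix.mul_one, hPP]
    abel
  have hQPSD : Q.PosSemidef := by
    rw [← hQQ]; exact Matrix.posSemidef_conjTranspose_mul_self Q
  have hQP : Q * P = 0 := by rw [hQdef, Matrix.sub_mul, Matrix.one_mul, hPP, sub_self]
  have hρQH : (ρ + Q).IsHermitian := hρ.1.1.add hQH
  have hρQPD : (ρ + Q).PosDef := by
    refine Matrix.PosDef.of_dotProduct_mulVec_pos hρQH fun x hx => ?_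
    have hsplit : star x ⬝ᵥ (ρ + Q) *ᵥ x = star x ⬝ᵥ ρ *ᵥ x + star x ⬝ᵥ Q *ᵥ x := by
      rw [Matrix.add_mulVec, dotProduct_add]
    have h1 := hρ.1.dotProduct_mulVec_nonneg x
    have h2 := hQPSD.dotProduct_mulVec_nonneg x
    rw [hsplit]
    rcases eq_or_lt_of_le (add_nonneg h1 h2) with heq | hlt
    · exfalso
      obtain ⟨ha, hb⟩ := Aux.add_eq_zero_of_nonneg h1 h2 heq.symm
      have hρx : ρ *ᵥ x = 0 := (hρ.1.dotProduct_mulVec_zero_iff x).mp ha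
      have hQx : Q *ᵥ x = 0 := (hQPSD.dotProduct_mulVec_zero_iff x).mp hb
      have hPx : P *ᵥ x = x := by
        rw [hQdef, Matrix.sub_mulVec, Matrix.one_mulVec, sub_eq_zero] at hQx
        exact hQx.symm
      have hxS : x ∈ S := hPx ▸ hPproj.2.2.1 x
      have hlt' := Aux.rank_lt_of_kernel hPproj hPρ hx hxS hρx
      rw [hρrank] at hlt'
      exact lt_irrefl _ hlt'
    · exact hlt
  have hρQPSD := hρQPD.posSemidef
  open scoped MatrixOrder in set R := CFC.sqrt (ρ + Q) with hRdef
  have hRPSD : R.PosSemidef := by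
    open scoped MatrixOrder in exact Matrix.nonneg_iff_posSemidef.mp (CFC.sqrt_nonneg _)
  have hRH : R.IsHermitian := hRPSD.1
  have hRR : R * R = ρ + Q := by
    open scoped MatrixOrder in exact CFC.sqrt_mul_sqrt_self _ hρQPSD.nonneg
  have hdet : IsUnit R.det := by
    apply isUnit_iff_ne_zero.mpr
    intro h0
    have hd := hρQPD.det_pos
    rw [← hRR, Matrix.det_mul, h0, mul_zero] at hd
    exact lt_irrefl _ hd
  have hinv1 : R * R⁻¹ = 1 := Matrix.mul_nonsing_inv R hdet
  have hinv2 : R⁻¹ * R = 1 := Matrix.nonsing_inv_mul R hdet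
  have hRiH : R⁻¹.IsHermitian := by
    show R⁻¹ᴴ = R⁻¹
    rw [Matrix.conjTranspose_nonsing_inv, hRH.eq]
  set A := R⁻¹ * T * R⁻¹ with hAdef
  have hAH : A.IsHermitian := by
    show Aᴴ = A
    rw [hAdef, Matrix.conjTranspose_mul, Matrix.conjTranspose_mul, hRiH.eq, hTH.eq,
      Matrix.mul_assoc]
  have hRAR : R * A * R = T := by
    rw [hAdef, show R * (R⁻¹ * T * R⁻¹) * R = R * R⁻¹ * T * (R⁻¹ * R) by
      simp only [Matrix.mul_assoc], hinv1, hinv2, Matrix.one_mul, Matrix.mul_one]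
  have hquad : ∀ w, star (R *ᵥ w) ⬝ᵥ A *ᵥ (R *ᵥ w) = star w ⬝ᵥ T *ᵥ w := by
    intro w
    rw [Matrix.star_mulVec, hRH.eq, Matrix.mulVec_mulVec, ← Matrix.dotProduct_mulVec,
      Matrix.mulVec_mulVec, ← Matrix.mul_assoc, hRAR]
  set ν := hTH.eigenvalues with hνdef
  have hsum : ∑ i, ν i = 0 := by
    have h := Aux.trace_eq_sum_eigenvalues hTH
    rw [htrT] at h
    have h2 : ((∑ i, ν i : ℝ) : ℂ) = 0 := by push_cast; rw [← h]
    exact_mod_cast h2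
  have hex : ∃ i, ν i ≠ 0 := by
    by_contra h
    push_neg at h
    apply hT0
    have hd : Matrix.diagonal (RCLike.ofReal ∘ ν : (m × n) → ℂ) = 0 := by
      ext i j
      by_cases hij : i = j
      · subst hij; simp [h i]
      · simp [Matrix.diagonal_apply_ne _ hij]
    rw [hTH.spectral_theorem, Unitary.conjStarAlgAut_apply, hd, Matrix.mul_zero, Matrix.zero_mul]
  obtain ⟨i₀, hi₀⟩ := hex
  have hneg : ∃ i, ν i < 0 := by
    by_contra h
    push_neg at h
    have h' := (Finset.sum_eq_zero_iff_of_nonneg (fun i _ => h i)).mp hsum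
    exact hi₀ (h' i₀ (Finset.mem_univ _))
  have hpos : ∃ i, 0 < ν i := by
    by_contra h
    push_neg at h
    have h' := (Finset.sum_eq_zero_iff_of_nonpos (fun i _ => h i)).mp hsum
    exact hi₀ (h' i₀ (Finset.mem_univ _))
  obtain ⟨jn, hjn⟩ := hneg
  obtain ⟨jp, hjp⟩ := hpos
  have hTneg : star (⇑(hTH.eigenvectorBasis jn) : (m × n) → ℂ) ⬝ᵥ
      T *ᵥ (⇑(hTH.eigenvectorBasis jn) : (m × n) → ℂ) < 0 := by
    rw [Aux.quadratic_eigen hTH jn]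
    exact mul_neg_of_neg_of_pos (by exact_mod_cast hjn)
      (Aux.dotProduct_star_self_pos' (Aux.eigenvector_ne_zero hTH jn))
  have hTpos : 0 < star (⇑(hTH.eigenvectorBasis jp) : (m × n) → ℂ) ⬝ᵥ
      T *ᵥ (⇑(hTH.eigenvectorBasis jp) : (m × n) → ℂ) := by
    rw [Aux.quadratic_eigen hTH jp]
    exact mul_pos (by exact_mod_cast hjp)
      (Aux.dotProduct_star_self_pos' (Aux.eigenvector_ne_zero hTH jp))
  have hAneg : ∃ x, star x ⬝ᵥ A *ᵥ x < 0 :=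
    ⟨R *ᵥ (⇑(hTH.eigenvectorBasis jn) : (m × n) → ℂ), by rw [hquad]; exact hTneg⟩
  have hAneg' : ∃ x, star x ⬝ᵥ (-A) *ᵥ x < 0 :=
    ⟨R *ᵥ (⇑(hTH.eigenvectorBasis jp) : (m × n) → ℂ), by
      rw [Matrix.neg_mulVec, dotProduct_neg, hquad]
      exact neg_lt_zero.mpr hTpos⟩
  obtain ⟨t1, ht1, hPSD1, w1, hw1, hker1⟩ := Aux.exists_pos_t hAH hAneg
  obtain ⟨s, hs, hPSD2', w2, hw2, hker2'⟩ := Aux.exists_pos_t hAH.neg hAneg'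
  have hrw : (1 : Matrix (m × n) (m × n) ℂ) + (((-s : ℝ) : ℂ)) • A = 1 + (s : ℂ) • (-A) := by
    rw [Complex.ofReal_neg, neg_smul, smul_neg]
  have hPSD2 : (1 + (((-s : ℝ) : ℂ)) • A).PosSemidef := by rw [hrw]; exact hPSD2'
  have hker2 : (1 + (((-s : ℝ) : ℂ)) • A) *ᵥ w2 = 0 := by rw [hrw]; exact hker2'
  have key : ∀ t : ℝ, (1 + (t : ℂ) • A).PosSemidef → ∀ w : (m × n) → ℂ, w ≠ 0 →
      (1 + (t : ℂ) • A) *ᵥ w = 0 →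
      IsDensity (ρ + (t : ℂ) • T) ∧ SupportedOn S (ρ + (t : ℂ) • T) ∧
        (ρ + (t : ℂ) • T).rank < Module.finrank ℂ S ∧ trB (ρ + (t : ℂ) • T) = trB ρ := by
    intro t hPSDt w hw hker
    have hsand : R * (1 + (t : ℂ) • A) * R = (ρ + (t : ℂ) • T) + Q := by
      rw [Matrix.mul_add, Matrix.add_mul, Matrix.mul_one, Matrix.mul_smul, Matrix.smul_mul,
        hRR, hRAR]
      abel
    have hPSDsum : ((ρ + (t : ℂ) • T) + Q).PosSemidef := by
      rw [← hsand]
      have h := hPSDt.mul_mul_conjTranspose_same R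
      rwa [hRH.eq] at h
    have hTtH : ((t : ℂ) • T).IsHermitian := by
      show ((t : ℂ) • T)ᴴ = (t : ℂ) • T
      rw [Matrix.conjTranspose_smul, hTH.eq, Complex.star_def, Complex.conj_ofReal]
    have hρtH : (ρ + (t : ℂ) • T).IsHermitian := hρ.1.1.add hTtH
    have hsupp : P * (ρ + (t : ℂ) • T) * P = ρ + (t : ℂ) • T := by
      rw [Matrix.mul_add, Matrix.add_mul, hPρ, Matrix.mul_smul, Matrix.smul_mul, hPT]
    have hQPx : ∀ x : (m × n) → ℂ, Q *ᵥ (P *ᵥ x) = 0 := fun x => by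
      rw [Matrix.mulVec_mulVec, hQP, Matrix.zero_mulVec]
    have hPSDρt : (ρ + (t : ℂ) • T).PosSemidef := by
      refine Matrix.PosSemidef.of_dotProduct_mulVec_nonneg hρtH fun x => ?_
      have hx1 : (ρ + (t : ℂ) • T) *ᵥ x = P *ᵥ ((ρ + (t : ℂ) • T) *ᵥ (P *ᵥ x)) := by
        conv_lhs => rw [← hsupp]
        rw [← Matrix.mulVec_mulVec, ← Matrix.mulVec_mulVec]
      have h2 : star x ⬝ᵥ (ρ + (t : ℂ) • T) *ᵥ x
          = star (P *ᵥ x) ⬝ᵥ ((ρ + (t : ℂ) • T) + Q) *ᵥ (P *ᵥ x) := by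
        calc star x ⬝ᵥ (ρ + (t : ℂ) • T) *ᵥ x
            = star x ⬝ᵥ P *ᵥ ((ρ + (t : ℂ) • T) *ᵥ (P *ᵥ x)) := by rw [← hx1]
          _ = (star x ᵥ* P) ⬝ᵥ ((ρ + (t : ℂ) • T) *ᵥ (P *ᵥ x)) :=
              Matrix.dotProduct_mulVec _ _ _
          _ = star (P *ᵥ x) ⬝ᵥ ((ρ + (t : ℂ) • T) *ᵥ (P *ᵥ x)) := by
              rw [Matrix.star_mulVec, hPH.eq]
          _ = star (P *ᵥ x) ⬝ᵥ ((ρ + (t : ℂ) • T) + Q) *ᵥ (P *ᵥ x) := by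
              conv_rhs => rw [Matrix.add_mulVec]
              rw [dotProduct_add, hQPx, dotProduct_zero, add_zero]
      rw [h2]
      exact hPSDsum.dotProduct_mulVec_nonneg _
    have htr : (ρ + (t : ℂ) • T).trace = 1 := by
      rw [Matrix.trace_add, Matrix.trace_smul, htrT, smul_zero, add_zero, hρ.2]
    set u := R⁻¹ *ᵥ w with hudef
    have hRu : R *ᵥ u = w := by rw [hudef, Matrix.mulVec_mulVec, hinv1, Matrix.one_mulVec]
    have hu0 : u ≠ 0 := by
      intro h
      apply hw
      rw [← hRu, h, Matrix.mulVec_zero]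
    have hkeru : ((ρ + (t : ℂ) • T) + Q) *ᵥ u = 0 := by
      rw [← hsand, ← Matrix.mulVec_mulVec, ← Matrix.mulVec_mulVec, hRu, hker,
        Matrix.mulVec_zero]
    have hzero : star u ⬝ᵥ (ρ + (t : ℂ) • T) *ᵥ u + star u ⬝ᵥ Q *ᵥ u = 0 := by
      rw [← dotProduct_add, ← Matrix.add_mulVec, hkeru, dotProduct_zero]
    obtain ⟨ha, hb⟩ := Aux.add_eq_zero_of_nonneg (hPSDρt.dotProduct_mulVec_nonneg u) (hQPSD.dotProduct_mulVec_nonneg u) hzero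
    have hρtu : (ρ + (t : ℂ) • T) *ᵥ u = 0 := (hPSDρt.dotProduct_mulVec_zero_iff u).mp ha
    have hQu : Q *ᵥ u = 0 := (hQPSD.dotProduct_mulVec_zero_iff u).mp hb
    have hPu : P *ᵥ u = u := by
      rw [hQdef, Matrix.sub_mulVec, Matrix.one_mulVec, sub_eq_zero] at hQu
      exact hQu.symm
    have huS : u ∈ S := hPu ▸ hPproj.2.2.1 u
    exact ⟨⟨hPSDρt, htr⟩, ⟨P, hPproj, hsupp⟩,
      Aux.rank_lt_of_kernel hPproj hsupp hu0 huS hρtu, htrB t⟩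
  obtain ⟨hd1, hs1, hr1, hb1⟩ := key t1 hPSD1 w1 hw1 hker1
  obtain ⟨hd2, hs2, hr2, hb2⟩ := key (-s) hPSD2 w2 hw2 hker2
  refine ⟨ρ + (t1 : ℂ) • T, ρ + ((-s : ℝ) : ℂ) • T, ?_, hd1, hs1, hd2, hs2, hr1, hr2, hb1, hb2⟩
  intro h
  have h' : ((t1 : ℂ) - ((-s : ℝ) : ℂ)) • T = 0 := by
    rw [sub_smul, sub_eq_zero]
    exact add_left_cancel h
  rcases smul_eq_zero.mp h' with hc | hc
  · have hts : t1 = -s := by exact_mod_cast sub_eq_zero.mp hc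
    linarith
  · exact hT0 hc

end
end

section
/- Let S be a ℂ-submodule of (m × n → ℂ) and suppose there exists a nonzero matrix T supported on S with trB T = 0. Then every Q in the intrinsic interior (intrinsicInterior over ℝ) of the convex set D_B(S) = {trB ρ | ρ a density matrix supported on S} has non-unique pre-images: there exist density matrices ρ1 ≠ ρ2 supported on S with trB ρ1 = trB ρ2 = Q, and moreover ρ1, ρ2 can be chosen with rank strictly less than dim S. -/
open scoped ComplexOrder

noncomputable section

open Matrix


section Aux

variable {k : Type*} [Fintype k] [DecidableEq k]

lemma qf_im_zero {M : Matrix k k ℂ} (h : M.IsHermitian) (x : k → ℂ) :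
    (star x ⬝ᵥ M *ᵥ x).im = 0 := by
  rw [← Complex.conj_eq_iff_im]
  calc (starRingEnd ℂ) (star x ⬝ᵥ M *ᵥ x)
      = star (star x ⬝ᵥ M *ᵥ x) := rfl
    _ = star (M *ᵥ x) ⬝ᵥ x := by rw [star_dotProduct x (M *ᵥ x), star_star]
    _ = star x ᵥ* Mᴴ ⬝ᵥ x := by rw [star_mulVec]
    _ = star x ⬝ᵥ Mᴴ *ᵥ x := (dotProduct_mulVec _ _ _).symm
    _ = star x ⬝ᵥ M *ᵥ x := by rw [h.eq]

omit [DecidableEq k] in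
lemma qf_support {A P : Matrix k k ℂ} (hP : P.IsHermitian) (x : k → ℂ) :
    star x ⬝ᵥ (P * A * P) *ᵥ x = star (P *ᵥ x) ⬝ᵥ A *ᵥ (P *ᵥ x) := by
  rw [star_mulVec, ← mulVec_mulVec, dotProduct_mulVec, hP.eq, ← vecMul_vecMul,
    ← dotProduct_mulVec, ← dotProduct_mulVec, mulVec_mulVec]

omit [DecidableEq k] in
lemma qf_real_smul (M : Matrix k k ℂ) (s : ℝ) (v : k → ℂ) :
    star (s • v) ⬝ᵥ M *ᵥ (s • v) = (s * s) • (star v ⬝ᵥ M *ᵥ v) := by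
  rw [star_smul, star_trivial, mulVec_smul, smul_dotProduct, dotProduct_smul, smul_smul]

omit [DecidableEq k] in
lemma psd_smul_real {A : Matrix k k ℂ} (hA : A.PosSemidef) {r : ℝ} (hr : 0 ≤ r) :
    (r • A).PosSemidef := by
  refine Matrix.PosSemidef.of_dotProduct_mulVec_nonneg ?_ ?_
  · rw [IsHermitian, conjTranspose_smul, star_trivial, hA.1.eq]
  · intro x
    rw [smul_mulVec, dotProduct_smul]
    have := hA.dotProduct_mulVec_nonneg x
    rw [Complex.real_smul]
    exact mul_nonneg (by exact_mod_cast Complex.zero_le_real.mpr hr) this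

omit [DecidableEq k] in
lemma herm_add_real_smul {A B : Matrix k k ℂ} (hA : A.IsHermitian) (hB : B.IsHermitian)
    (t : ℝ) : (A + t • B).IsHermitian := by
  rw [IsHermitian, conjTranspose_add, conjTranspose_smul, star_trivial, hA.eq, hB.eq]

lemma qf_diag (A : Matrix k k ℂ) (i : k) :
    star (Pi.single i (1:ℂ)) ⬝ᵥ A *ᵥ (Pi.single i (1:ℂ)) = A i i := by
  classical
  have h1 : star (Pi.single i (1:ℂ) : k → ℂ) = (Pi.single i (1:ℂ) : k → ℂ) := by
    ext j; by_cases h : j = i <;> simp [Pi.single_apply, h]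
  rw [h1]
  simp [dotProduct, Matrix.mulVec_single, Pi.single_apply]

lemma psd_trace_nonneg {A : Matrix k k ℂ} (hA : A.PosSemidef) : 0 ≤ A.trace := by
  rw [Matrix.trace]
  refine Finset.sum_nonneg fun i _ => ?_
  have := hA.dotProduct_mulVec_nonneg (Pi.single i 1)
  rwa [qf_diag] at this

lemma psd_eq_zero_of_trace {A : Matrix k k ℂ} (hA : A.PosSemidef) (h : A.trace = 0) :
    A = 0 := by
  have hdiag : ∀ i, A i i = 0 := by
    intro i
    have hsum : ∑ i, A.diag i = 0 := h
    have hnn : ∀ i ∈ Finset.univ, 0 ≤ A.diag i := fun i _ => by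
      have := hA.dotProduct_mulVec_nonneg (Pi.single i 1); rwa [qf_diag] at this
    exact (Finset.sum_eq_zero_iff_of_nonneg hnn).mp hsum i (Finset.mem_univ i)
  have hcol : ∀ i, A *ᵥ Pi.single i 1 = 0 := by
    intro i
    rw [← hA.dotProduct_mulVec_zero_iff, qf_diag]
    exact hdiag i
  ext j i
  have := congrFun (hcol i) j
  simpa [Matrix.mulVec_single] using this

lemma psd_trace_pos {A : Matrix k k ℂ} (hA : A.PosSemidef) (h0 : A ≠ 0) : 0 < A.trace :=
  lt_of_le_of_ne (psd_trace_nonneg hA) fun h => h0 (psd_eq_zero_of_trace hA h.symm)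

lemma proj_unique {S : Submodule ℂ (k → ℂ)} {P P' : Matrix k k ℂ}
    (hP : IsOrthProjOnto S P) (hP' : IsOrthProjOnto S P') : P = P' := by
  have h1 : P' * P = P := by
    ext i j
    have : ∀ x, (P' * P) *ᵥ x = P *ᵥ x := fun x => by
      rw [← mulVec_mulVec]; exact hP'.2.2.2 _ (hP.2.2.1 x)
    have := congrFun (this (Pi.single j 1)) i
    simpa [Matrix.mulVec_single] using this
  have h2 : P * P' = P' := by
    ext i j
    have : ∀ x, (P * P') *ᵥ x = P' *ᵥ x := fun x => by
      rw [← mulVec_mulVec]; exact hP.2.2.2 _ (hP'.2.2.1 x)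
    have := congrFun (this (Pi.single j 1)) i
    simpa [Matrix.mulVec_single] using this
  calc P = (P' * P)ᴴ := by rw [h1, hP.1.eq]
    _ = Pᴴ * P'ᴴ := by rw [conjTranspose_mul]
    _ = P * P' := by rw [hP.1.eq, hP'.1.eq]
    _ = P' := h2

end Aux

section Aux2

variable {k : Type*} [Fintype k] [DecidableEq k]

lemma exists_mulVec_ne_zero {A : Matrix k k ℂ} (hA : A ≠ 0) : ∃ x, A *ᵥ x ≠ 0 := by
  by_contra h
  push_neg at h
  apply hA
  ext i j
  have := congrFun (h (Pi.single j 1)) i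
  simpa [Matrix.mulVec_single] using this

lemma range_proj {S : Submodule ℂ (k → ℂ)} {P : Matrix k k ℂ} (hP : IsOrthProjOnto S P) :
    LinearMap.range P.mulVecLin = S := by
  apply le_antisymm
  · rintro y ⟨x, rfl⟩
    exact hP.2.2.1 x
  · intro y hy
    exact ⟨y, hP.2.2.2 y hy⟩

lemma rank_lt_of_kernel_vector {S : Submodule ℂ (k → ℂ)} {P σ : Matrix k k ℂ}
    (hP : IsOrthProjOnto S P) (hσP : P * σ * P = σ)
    {v : k → ℂ} (hv : v ∈ S) (hv0 : v ≠ 0) (hker : σ *ᵥ v = 0) :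
    σ.rank < Module.finrank ℂ S := by
  have hkerP : LinearMap.ker P.mulVecLin ≤ LinearMap.ker σ.mulVecLin := by
    intro x hx
    simp only [LinearMap.mem_ker, Matrix.mulVecLin_apply] at hx ⊢
    rw [← hσP, ← Matrix.mulVec_mulVec, ← Matrix.mulVec_mulVec, hx, Matrix.mulVec_zero,
      Matrix.mulVec_zero]
  have hvker : v ∈ LinearMap.ker σ.mulVecLin := by
    simp only [LinearMap.mem_ker, Matrix.mulVecLin_apply]; exact hker
  have hvnotP : v ∉ LinearMap.ker P.mulVecLin := by
    simp only [LinearMap.mem_ker, Matrix.mulVecLin_apply]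
    rw [hP.2.2.2 v hv]; exact hv0
  have hlt : LinearMap.ker P.mulVecLin < LinearMap.ker σ.mulVecLin :=
    lt_of_le_of_ne hkerP (fun h => hvnotP (h ▸ hvker))
  have hfin : Module.finrank ℂ (LinearMap.ker P.mulVecLin)
      < Module.finrank ℂ (LinearMap.ker σ.mulVecLin) :=
    Submodule.finrank_lt_finrank_of_lt hlt
  have e1 : σ.rank + Module.finrank ℂ (LinearMap.ker σ.mulVecLin) = Fintype.card k := by
    rw [Matrix.rank]
    rw [LinearMap.finrank_range_add_finrank_ker σ.mulVecLin]
    simp [Module.finrank_fintype_fun_eq_card]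
  have e2 : Module.finrank ℂ S + Module.finrank ℂ (LinearMap.ker P.mulVecLin)
      = Fintype.card k := by
    conv_lhs => rw [← range_proj hP]
    rw [LinearMap.finrank_range_add_finrank_ker P.mulVecLin]
    simp [Module.finrank_fintype_fun_eq_card]
  omega

lemma isClosed_psd : IsClosed {M : Matrix k k ℂ | M.PosSemidef} := by
  have heq : {M : Matrix k k ℂ | M.PosSemidef} =
      {M : Matrix k k ℂ | Mᴴ = M} ∩ ⋂ x : k → ℂ, {M | 0 ≤ (star x ⬝ᵥ M *ᵥ x).re} := by
    ext M
    simp only [Set.mem_setOf_eq, Set.mem_inter_iff, Set.mem_iInter]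
    constructor
    · intro h
      refine ⟨h.1.eq, fun x => ?_⟩
      have := h.dotProduct_mulVec_nonneg x
      rw [Complex.le_def] at this
      exact this.1
    · rintro ⟨h1, h2⟩
      refine Matrix.PosSemidef.of_dotProduct_mulVec_nonneg h1 fun x => ?_
      rw [Complex.le_def]
      exact ⟨by simpa using h2 x, by simpa using (qf_im_zero h1 x).symm⟩
  rw [heq]
  apply IsClosed.inter
  · exact isClosed_eq continuous_id.matrix_conjTranspose continuous_id
  · refine isClosed_iInter fun x => ?_
    have hc : Continuous fun M : Matrix k k ℂ => (star x ⬝ᵥ M *ᵥ x).re := by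
      simp only [dotProduct, Matrix.mulVec]
      fun_prop
    exact isClosed_le continuous_const hc

end Aux2

section Aux3

variable {k : Type*} [Fintype k] [DecidableEq k]

lemma exists_delta {S : Submodule ℂ (k → ℂ)} {P σ T : Matrix k k ℂ}
    (hP : IsOrthProjOnto S P) (hσ : σ.PosSemidef) (hσP : P * σ * P = σ)
    (hT : T.IsHermitian) (hTP : P * T * P = T)
    (hpos : ∀ v ∈ S, v ≠ 0 → 0 < (star v ⬝ᵥ σ *ᵥ v).re)
    (hne : ∃ v ∈ S, v ≠ 0) :
    ∃ δ : ℝ, 0 < δ ∧ ∀ t : ℝ, |t| ≤ δ → (σ + t • T).PosSemidef := by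
  classical
  set A : Set (k → ℂ) := (S : Set (k → ℂ)) ∩ Metric.sphere 0 1 with hA
  have hAc : IsCompact A :=
    (isCompact_sphere (0 : k → ℂ) 1).inter_left S.closed_of_finiteDimensional
  have hAne : A.Nonempty := by
    obtain ⟨v, hvS, hv0⟩ := hne
    refine ⟨(‖v‖⁻¹ : ℝ) • v, ?_, ?_⟩
    · have : (‖v‖⁻¹ : ℝ) • v = ((‖v‖⁻¹ : ℝ) : ℂ) • v := by
        ext i; simp [Complex.real_smul]
      rw [this]
      exact S.smul_mem _ hvS
    · simp only [mem_sphere_iff_norm, sub_zero, norm_smul, norm_inv, norm_norm]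
      field_simp [norm_ne_zero_iff.mpr hv0]
  have hfc : Continuous fun v : k → ℂ => (star v ⬝ᵥ σ *ᵥ v).re := by
    simp only [dotProduct, Matrix.mulVec]; fun_prop
  have hgc : Continuous fun v : k → ℂ => ‖star v ⬝ᵥ T *ᵥ v‖ := by
    apply continuous_norm.comp
    simp only [dotProduct, Matrix.mulVec]; fun_prop
  obtain ⟨u, huA, hu⟩ := hAc.exists_isMinOn hAne hfc.continuousOn
  obtain ⟨w, hwA, hw⟩ := hAc.exists_isMaxOn hAne hgc.continuousOn
  set c : ℝ := (star u ⬝ᵥ σ *ᵥ u).re with hc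
  set C : ℝ := ‖star w ⬝ᵥ T *ᵥ w‖ with hC
  have hc0 : 0 < c := by
    apply hpos u huA.1
    intro h
    have := huA.2
    simp [h] at this
  have hC0 : 0 ≤ C := norm_nonneg _
  refine ⟨c / (C + 1), by positivity, fun t ht => ?_⟩
  refine Matrix.PosSemidef.of_dotProduct_mulVec_nonneg ?_ ?_
  · exact herm_add_real_smul hσ.1 hT t
  · intro x
    set v : k → ℂ := P *ᵥ x with hvdef
    have hvS : v ∈ S := hP.2.2.1 x
    have e1 : star x ⬝ᵥ σ *ᵥ x = star v ⬝ᵥ σ *ᵥ v := by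
      conv_lhs => rw [← hσP]
      rw [qf_support hP.1]
    have e2 : star x ⬝ᵥ T *ᵥ x = star v ⬝ᵥ T *ᵥ v := by
      conv_lhs => rw [← hTP]
      rw [qf_support hP.1]
    have hqf : star x ⬝ᵥ (σ + t • T) *ᵥ x
        = star v ⬝ᵥ σ *ᵥ v + (t : ℂ) * (star v ⬝ᵥ T *ᵥ v) := by
      rw [Matrix.add_mulVec, dotProduct_add, Matrix.smul_mulVec,
        dotProduct_smul, e1, e2, Complex.real_smul]
    have him : (star x ⬝ᵥ (σ + t • T) *ᵥ x).im = 0 :=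
      qf_im_zero (herm_add_real_smul hσ.1 hT t) x
    rw [Complex.le_def]
    refine ⟨?_, by simpa using him.symm⟩
    simp only [Complex.zero_re]
    rw [hqf]
    by_cases hv0 : v = 0
    · simp [hv0]
    · -- normalize
      set r : ℝ := ‖v‖ with hr
      have hr0 : 0 < r := norm_pos_iff.mpr hv0
      set u' : k → ℂ := (r⁻¹ : ℝ) • v with hu'
      have hu'A : u' ∈ A := by
        constructor
        · have : (r⁻¹ : ℝ) • v = ((r⁻¹ : ℝ) : ℂ) • v := by ext i; simp [Complex.real_smul]
          rw [hu', this]; exact S.smul_mem _ hvS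
        · simp only [hu', mem_sphere_iff_norm, sub_zero, norm_smul, norm_inv, norm_norm,
            Real.norm_eq_abs, abs_inv, abs_of_pos hr0]
          field_simp
          exact hr.symm
      have hvu : v = (r : ℝ) • u' := by
        rw [hu', smul_smul]
        rw [mul_inv_cancel₀ (ne_of_gt hr0), one_smul]
      have hσv : (star v ⬝ᵥ σ *ᵥ v) = (r * r) • (star u' ⬝ᵥ σ *ᵥ u') := by
        conv_lhs => rw [hvu]
        exact qf_real_smul σ r u'
      have hTv : (star v ⬝ᵥ T *ᵥ v) = (r * r) • (star u' ⬝ᵥ T *ᵥ u') := by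
        conv_lhs => rw [hvu]
        exact qf_real_smul T r u'
      have hre : (star v ⬝ᵥ σ *ᵥ v + (t : ℂ) * (star v ⬝ᵥ T *ᵥ v)).re
          = (r * r) * ((star u' ⬝ᵥ σ *ᵥ u').re + t * (star u' ⬝ᵥ T *ᵥ u').re) := by
        rw [hσv, hTv]
        simp [Complex.add_re, Complex.smul_re, Complex.mul_re, Complex.ofReal_re,
          Complex.ofReal_im]
        ring
      rw [hre]
      have h1 : c ≤ (star u' ⬝ᵥ σ *ᵥ u').re := hu hu'A
      have h2 : ‖star u' ⬝ᵥ T *ᵥ u'‖ ≤ C := hw hu'A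
      have h3 : -C ≤ (star u' ⬝ᵥ T *ᵥ u').re := by
        have := Complex.abs_re_le_norm (star u' ⬝ᵥ T *ᵥ u')
        have h4 := (abs_le.mp (le_trans this h2)).1
        linarith
      have habs : |t| ≤ c / (C + 1) := ht
      have hCt : |t * (star u' ⬝ᵥ T *ᵥ u').re| ≤ (c / (C+1)) * C := by
        rw [abs_mul]
        apply mul_le_mul habs _ (abs_nonneg _) (by positivity)
        have := Complex.abs_re_le_norm (star u' ⬝ᵥ T *ᵥ u')
        exact le_trans this h2
      have h5 : -((c / (C+1)) * C) ≤ t * (star u' ⬝ᵥ T *ᵥ u').re := (abs_le.mp hCt).1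
      have h6 : (c / (C+1)) * C ≤ c := by
        rw [div_mul_eq_mul_div, div_le_iff₀ (by positivity)]
        nlinarith
      have : 0 ≤ (star u' ⬝ᵥ σ *ᵥ u').re + t * (star u' ⬝ᵥ T *ᵥ u').re := by linarith
      positivity

end Aux3

section Aux4

variable {k : Type*} [Fintype k] [DecidableEq k]

omit [DecidableEq k] in
lemma psd_re_nonneg {A : Matrix k k ℂ} (hA : A.PosSemidef) (x : k → ℂ) :
    0 ≤ (star x ⬝ᵥ A *ᵥ x).re := by
  have := hA.dotProduct_mulVec_nonneg x
  rw [Complex.le_def] at this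
  simpa using this.1

omit [DecidableEq k] in
lemma qf_line_re (A B : Matrix k k ℂ) (x : k → ℂ) (t : ℝ) :
    (star x ⬝ᵥ (A + t • B) *ᵥ x).re
      = (star x ⬝ᵥ A *ᵥ x).re + t * (star x ⬝ᵥ B *ᵥ x).re := by
  rw [Matrix.add_mulVec, dotProduct_add, Matrix.smul_mulVec,
    dotProduct_smul, Complex.add_re, Complex.real_smul]
  simp [Complex.mul_re]

section TrBlemmas

variable {m n : Type*} [Fintype m] [Fintype n]

lemma trB_add (A B : Matrix (m × n) (m × n) ℂ) : trB (A + B) = trB A + trB B := by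
  ext i i'
  simp [trB, Finset.sum_add_distrib]

lemma trB_smul_real (r : ℝ) (A : Matrix (m × n) (m × n) ℂ) : trB (r • A) = r • trB A := by
  ext i i'
  simp [trB, Finset.smul_sum]

lemma trB_sub (A B : Matrix (m × n) (m × n) ℂ) : trB (A - B) = trB A - trB B := by
  ext i i'
  simp [trB, Finset.sum_sub_distrib]

lemma trB_smul (c : ℂ) (A : Matrix (m × n) (m × n) ℂ) : trB (c • A) = c • trB A := by
  ext i i'
  simp [trB, Finset.mul_sum]

lemma trB_conjTranspose (A : Matrix (m × n) (m × n) ℂ) : trB Aᴴ = (trB A)ᴴ := by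
  ext i i'
  simp [trB, Matrix.conjTranspose_apply, map_sum]

lemma trace_trB (A : Matrix (m × n) (m × n) ℂ) : (trB A).trace = A.trace := by
  rw [Matrix.trace, Matrix.trace, Fintype.sum_prod_type]
  simp [trB, Matrix.diag]

end TrBlemmas


end Aux4

theorem interior_points_have_nonunique_preimages
    {m n : Type*} [Fintype m] [Fintype n] [DecidableEq m] [DecidableEq n]
    (S : Submodule ℂ (m × n → ℂ))
    (T : Matrix (m × n) (m × n) ℂ) (hT0 : T ≠ 0)
    (hTS : SupportedOn S T) (hTtr : trB T = 0)
    (Q : Matrix m m ℂ) (hQ : Q ∈ intrinsicInterior ℝ (DB S)) :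
    ∃ ρ1 ρ2 : Matrix (m × n) (m × n) ℂ, ρ1 ≠ ρ2 ∧
      IsDensity ρ1 ∧ SupportedOn S ρ1 ∧ IsDensity ρ2 ∧ SupportedOn S ρ2 ∧
      trB ρ1 = Q ∧ trB ρ2 = Q ∧
      ρ1.rank < Module.finrank ℂ S ∧ ρ2.rank < Module.finrank ℂ S := by
  classical
  obtain ⟨P, hP, hTPsup⟩ := hTS
  -- replace T by a nonzero Hermitian matrix with the same properties
  have hTct : P * Tᴴ * P = Tᴴ := by
    have h := congrArg Matrix.conjTranspose hTPsup
    simpa [Matrix.conjTranspose_mul, hP.1.eq, Matrix.mul_assoc] using h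
  have htrct : trB Tᴴ = 0 := by rw [trB_conjTranspose, hTtr]; simp
  obtain ⟨TH, hTH0, hTHh, hTHP, hTHtr⟩ :
      ∃ TH : Matrix (m × n) (m × n) ℂ, TH ≠ 0 ∧ TH.IsHermitian ∧ P * TH * P = TH ∧
        trB TH = 0 := by
    by_cases h : T + Tᴴ ≠ 0
    · refine ⟨T + Tᴴ, h, Matrix.isHermitian_add_transpose_self T, ?_, ?_⟩
      · rw [Matrix.mul_add, Matrix.add_mul, hTPsup, hTct]
      · rw [trB_add, hTtr, htrct, add_zero]
    · push_neg at h
      have hTT : Tᴴ = -T := eq_neg_of_add_eq_zero_right h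
      refine ⟨Complex.I • (T - Tᴴ), ?_, ?_, ?_, ?_⟩
      · rw [hTT, sub_neg_eq_add]
        intro hcon
        rw [smul_eq_zero] at hcon
        rcases hcon with h1 | h1
        · exact Complex.I_ne_zero h1
        · apply hT0
          have : (2 : ℂ) • T = 0 := by rw [two_smul]; exact h1
          rcases smul_eq_zero.mp this with h2 | h2
          · norm_num at h2
          · exact h2
      · show (Complex.I • (T - Tᴴ))ᴴ = Complex.I • (T - Tᴴ)
        rw [Matrix.conjTranspose_smul, Matrix.conjTranspose_sub, Matrix.conjTranspose_conjTranspose]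
        simp only [Complex.star_def, Complex.conj_I]
        module
      · rw [Matrix.mul_smul, Matrix.smul_mul, Matrix.mul_sub, Matrix.sub_mul, hTPsup, hTct]
      · rw [trB_smul, trB_sub, hTtr, htrct, sub_zero, smul_zero]
  clear hTct htrct hTPsup hT0 hTtr
  have hTHtrace : TH.trace = 0 := by rw [← trace_trB TH, hTHtr, Matrix.trace_zero]
  -- P is a nonzero psd projection
  have hPpsd : P.PosSemidef := by
    have hPP : P = Pᴴ * P := by rw [hP.1.eq, hP.2.1]
    rw [hPP]; exact Matrix.posSemidef_conjTranspose_mul_self P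
  have hPne : P ≠ 0 := by
    intro h
    apply hTH0
    rw [← hTHP, h, Matrix.zero_mul, Matrix.zero_mul]
  have htrP : 0 < P.trace := psd_trace_pos hPpsd hPne
  rw [Complex.lt_def] at htrP
  set r : ℝ := P.trace.re with hrdef
  have hr0 : 0 < r := by simpa using htrP.1
  have htrPr : P.trace = (r : ℂ) := by
    apply Complex.ext
    · simp [hrdef]
    · simp [← htrP.2]
  -- the full-rank density matrix on S
  set ρfull : Matrix (m × n) (m × n) ℂ := r⁻¹ • P with hρfulldef
  have hfullpsd : ρfull.PosSemidef := psd_smul_real hPpsd (by positivity)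
  have hfulltr : ρfull.trace = 1 := by
    rw [hρfulldef, Matrix.trace_smul, htrPr, Complex.real_smul, ← Complex.ofReal_mul,
      inv_mul_cancel₀ (ne_of_gt hr0), Complex.ofReal_one]
  have hfullP : P * ρfull * P = ρfull := by
    rw [hρfulldef, Matrix.mul_smul, Matrix.smul_mul, hP.2.1, hP.2.1]
  have hfullsup : SupportedOn S ρfull := ⟨P, hP, hfullP⟩
  set Q0 : Matrix m m ℂ := trB ρfull with hQ0def
  have hQ0mem : Q0 ∈ DB S := ⟨ρfull, ⟨hfullpsd, hfulltr⟩, hfullsup, rfl⟩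
  -- use the intrinsic interior to push past Q
  have hQmem : Q ∈ DB S := intrinsicInterior_subset hQ
  have hQspan : Q ∈ affineSpan ℝ (DB S) := subset_affineSpan ℝ _ hQmem
  have hQ0span : Q0 ∈ affineSpan ℝ (DB S) := subset_affineSpan ℝ _ hQ0mem
  set c : ℝ → Matrix m m ℂ := fun t => t • (Q - Q0) + Q0 with hcdef
  have hcmem : ∀ t, c t ∈ affineSpan ℝ (DB S) := by
    intro t
    have := AffineSubspace.smul_vsub_vadd_mem (affineSpan ℝ (DB S)) t hQspan hQ0span hQ0span
    simpa [vsub_eq_sub, vadd_eq_add] using this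
  obtain ⟨y, hyint, hyQ⟩ := mem_intrinsicInterior.mp hQ
  set f : ℝ → affineSpan ℝ (DB S) := fun t => ⟨c t, hcmem t⟩ with hfdef
  have hfc : Continuous f := by
    apply Continuous.subtype_mk
    fun_prop
  set U : Set ℝ := f ⁻¹' interior ((↑) ⁻¹' (DB S)) with hUdef
  have hUopen : IsOpen U := isOpen_interior.preimage hfc
  have h1U : (1 : ℝ) ∈ U := by
    have hf1 : f 1 = y := by
      apply Subtype.ext
      show c 1 = ↑y
      rw [hyQ, hcdef]
      simp
    show f 1 ∈ interior _
    rw [hf1]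
    exact hyint
  obtain ⟨ε, hε, hball⟩ := Metric.isOpen_iff.mp hUopen 1 h1U
  set t1 : ℝ := 1 + ε / 2 with ht1def
  have ht1 : 1 < t1 := by rw [ht1def]; linarith
  have ht1pos : 0 < t1 := by linarith
  have ht1U : t1 ∈ U := by
    apply hball
    rw [Metric.mem_ball, Real.dist_eq, ht1def]
    rw [show 1 + ε / 2 - 1 = ε / 2 by ring, abs_of_pos (by linarith)]
    linarith
  have hct1 : c t1 ∈ DB S := by
    have : f t1 ∈ (↑) ⁻¹' (DB S) := interior_subset ht1U
    exact this
  obtain ⟨ρ'', ⟨hρ''psd, hρ''tr⟩, hρ''sup, hρ''trB⟩ := hct1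
  obtain ⟨P', hP', hP'sup⟩ := hρ''sup
  have hPP' : P' = P := proj_unique hP' hP
  rw [hPP'] at hP'sup
  -- the interior convex combination
  set a : ℝ := t1⁻¹ with hadef
  set b : ℝ := 1 - t1⁻¹ with hbdef
  have ha : 0 < a := by rw [hadef]; positivity
  have hb : 0 < b := by
    rw [hbdef, sub_pos]
    exact inv_lt_one_of_one_lt₀ ht1
  have hab : a + b = 1 := by rw [hadef, hbdef]; ring
  set ρ : Matrix (m × n) (m × n) ℂ := a • ρ'' + b • ρfull with hρdef
  have hρpsd : ρ.PosSemidef := (psd_smul_real hρ''psd ha.le).add (psd_smul_real hfullpsd hb.le)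
  have hρtr : ρ.trace = 1 := by
    rw [hρdef, Matrix.trace_add, Matrix.trace_smul, Matrix.trace_smul, hρ''tr, hfulltr]
    rw [Complex.real_smul, Complex.real_smul]
    push_cast
    rw [mul_one, mul_one, ← Complex.ofReal_add, hab, Complex.ofReal_one]
  have hρP : P * ρ * P = ρ := by
    rw [hρdef, Matrix.mul_add, Matrix.add_mul, Matrix.mul_smul, Matrix.smul_mul,
      Matrix.mul_smul, Matrix.smul_mul, hP'sup, hfullP]
  have hρtrB : trB ρ = Q := by
    rw [hρdef, trB_add, trB_smul_real, trB_smul_real, hρ''trB, ← hQ0def]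
    show a • (t1 • (Q - Q0) + Q0) + b • Q0 = Q
    rw [smul_add, smul_smul, hadef, inv_mul_cancel₀ (ne_of_gt ht1pos), one_smul, ← hadef]
    rw [add_assoc, ← add_smul, hab, one_smul]
    exact sub_add_cancel Q Q0
  have hρpos : ∀ v ∈ S, v ≠ 0 → 0 < (star v ⬝ᵥ ρ *ᵥ v).re := by
    intro v hv hv0
    have hqf : star v ⬝ᵥ ρ *ᵥ v
        = a • (star v ⬝ᵥ ρ'' *ᵥ v) + b • (star v ⬝ᵥ ρfull *ᵥ v) := by
      rw [hρdef, Matrix.add_mulVec, dotProduct_add, Matrix.smul_mulVec,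
        Matrix.smul_mulVec, dotProduct_smul, dotProduct_smul]
    have hfullv : star v ⬝ᵥ ρfull *ᵥ v = r⁻¹ • (star v ⬝ᵥ v) := by
      rw [hρfulldef, Matrix.smul_mulVec, hP.2.2.2 v hv, dotProduct_smul]
    have hvv : 0 < star v ⬝ᵥ v := Matrix.dotProduct_star_self_pos_iff.mpr hv0
    rw [Complex.lt_def] at hvv
    have hvvre : 0 < (star v ⬝ᵥ v).re := by simpa using hvv.1
    have h1 : 0 ≤ (star v ⬝ᵥ ρ'' *ᵥ v).re := psd_re_nonneg hρ''psd v
    have h2 : (star v ⬝ᵥ ρfull *ᵥ v).re = r⁻¹ * (star v ⬝ᵥ v).re := by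
      rw [hfullv, Complex.real_smul]
      simp [Complex.mul_re]
    rw [hqf]
    rw [Complex.add_re, Complex.real_smul, Complex.real_smul]
    simp only [Complex.mul_re, Complex.ofReal_re, Complex.ofReal_im, zero_mul, sub_zero]
    rw [h2]
    have : 0 < b * (r⁻¹ * (star v ⬝ᵥ v).re) := by positivity
    nlinarith
  -- a nonzero vector of S
  have hne : ∃ v ∈ S, v ≠ 0 := by
    obtain ⟨x, hx⟩ := exists_mulVec_ne_zero hTH0
    refine ⟨P *ᵥ x, hP.2.2.1 x, ?_⟩
    intro hPx
    apply hx
    rw [← hTHP, ← Matrix.mulVec_mulVec, ← Matrix.mulVec_mulVec, hPx, Matrix.mulVec_zero,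
      Matrix.mulVec_zero]
  -- the feasible interval
  set K : Set ℝ := {t | (ρ + t • TH).PosSemidef} with hKdef
  have hKclosed : IsClosed K := by
    have hcont : Continuous fun t : ℝ => ρ + t • TH := by fun_prop
    exact IsClosed.preimage hcont isClosed_psd
  obtain ⟨δ, hδ0, hδK⟩ := exists_delta hP hρpsd hρP hTHh hTHP hρpos hne
  have hδmem : δ ∈ K := hδK δ (by rw [abs_of_pos hδ0])
  have hmδmem : -δ ∈ K := hδK (-δ) (by rw [abs_neg, abs_of_pos hδ0])
  have hKne : K.Nonempty := ⟨δ, hδmem⟩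
  -- bounds
  have hxm : ∃ x, (star x ⬝ᵥ TH *ᵥ x).re < 0 := by
    by_contra hco
    push_neg at hco
    have hpsd : TH.PosSemidef := by
      refine Matrix.PosSemidef.of_dotProduct_mulVec_nonneg hTHh fun x => ?_
      rw [Complex.le_def]
      exact ⟨by simpa using hco x, by simpa using (qf_im_zero hTHh x).symm⟩
    exact hTH0 (psd_eq_zero_of_trace hpsd hTHtrace)
  have hxp : ∃ x, 0 < (star x ⬝ᵥ TH *ᵥ x).re := by
    by_contra hco
    push_neg at hco
    have hpsd : (-TH).PosSemidef := by
      refine Matrix.PosSemidef.of_dotProduct_mulVec_nonneg hTHh.neg fun x => ?_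
      rw [Complex.le_def]
      have : star x ⬝ᵥ (-TH) *ᵥ x = -(star x ⬝ᵥ TH *ᵥ x) := by
        rw [Matrix.neg_mulVec, dotProduct_neg]
      rw [this]
      constructor
      · simp only [Complex.zero_re, Complex.neg_re]
        linarith [hco x]
      · have := qf_im_zero hTHh x
        simp [this]
    have : (-TH) = 0 := psd_eq_zero_of_trace hpsd (by simp [hTHtrace])
    exact hTH0 (by rwa [neg_eq_zero] at this)
  obtain ⟨xm, hxmlt⟩ := hxm
  obtain ⟨xp, hxplt⟩ := hxp
  have hbddA : BddAbove K := by
    refine ⟨(star xm ⬝ᵥ ρ *ᵥ xm).re / (-(star xm ⬝ᵥ TH *ᵥ xm).re), fun t htK => ?_⟩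
    have h0 : 0 ≤ (star xm ⬝ᵥ (ρ + t • TH) *ᵥ xm).re := psd_re_nonneg htK xm
    rw [qf_line_re] at h0
    rw [le_div_iff₀ (by linarith : (0:ℝ) < -(star xm ⬝ᵥ TH *ᵥ xm).re)]
    nlinarith
  have hbddB : BddBelow K := by
    refine ⟨-((star xp ⬝ᵥ ρ *ᵥ xp).re / (star xp ⬝ᵥ TH *ᵥ xp).re), fun t htK => ?_⟩
    have h0 : 0 ≤ (star xp ⬝ᵥ (ρ + t • TH) *ᵥ xp).re := psd_re_nonneg htK xp
    rw [qf_line_re] at h0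
    rw [neg_le, le_div_iff₀ hxplt]
    nlinarith
  set tp : ℝ := sSup K with htpdef
  set tm : ℝ := sInf K with htmdef
  have htpK : tp ∈ K := hKclosed.csSup_mem hKne hbddA
  have htmK : tm ∈ K := hKclosed.csInf_mem hKne hbddB
  have hδtp : δ ≤ tp := le_csSup hbddA hδmem
  have htmδ : tm ≤ -δ := csInf_le hbddB hmδmem
  have htptm : tm < tp := by linarith
  -- common facts for ρ + t • TH
  have hsupp : ∀ t : ℝ, P * (ρ + t • TH) * P = ρ + t • TH := fun t => by
    rw [Matrix.mul_add, Matrix.add_mul, Matrix.mul_smul, Matrix.smul_mul, hρP, hTHP]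
  have htr : ∀ t : ℝ, (ρ + t • TH).trace = 1 := fun t => by
    rw [Matrix.trace_add, Matrix.trace_smul, hρtr, hTHtrace, smul_zero, add_zero]
  have htrB : ∀ t : ℝ, trB (ρ + t • TH) = Q := fun t => by
    rw [trB_add, trB_smul_real, hρtrB, hTHtr, smul_zero, add_zero]
  -- the rank degeneration at the endpoints
  have key : ∀ t0 : ℝ, t0 ∈ K →
      (∀ δ1 : ℝ, 0 < δ1 →
        ¬ ((ρ + (t0 + δ1) • TH).PosSemidef ∧ (ρ + (t0 - δ1) • TH).PosSemidef)) →
      (ρ + t0 • TH).rank < Module.finrank ℂ S := by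
    intro t0 ht0 hmax
    have ht0psd : (ρ + t0 • TH).PosSemidef := ht0
    have hnotpos : ¬ ∀ v ∈ S, v ≠ 0 → 0 < (star v ⬝ᵥ (ρ + t0 • TH) *ᵥ v).re := by
      intro hpos
      obtain ⟨δ1, hδ1, hall⟩ := exists_delta hP ht0psd (hsupp t0) hTHh hTHP hpos hne
      apply hmax δ1 hδ1
      constructor
      · have := hall δ1 (by rw [abs_of_pos hδ1])
        rwa [add_assoc, ← add_smul] at this
      · have := hall (-δ1) (by rw [abs_neg, abs_of_pos hδ1])
        rw [add_assoc, ← add_smul] at this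
        rwa [show t0 + -δ1 = t0 - δ1 by ring] at this
    push_neg at hnotpos
    obtain ⟨v, hvS, hv0, hnle⟩ := hnotpos
    have hre0 : (star v ⬝ᵥ (ρ + t0 • TH) *ᵥ v).re = 0 :=
      le_antisymm hnle (psd_re_nonneg ht0psd v)
    have hqf0 : star v ⬝ᵥ (ρ + t0 • TH) *ᵥ v = 0 := by
      apply Complex.ext
      · simpa using hre0
      · simpa using qf_im_zero ht0psd.1 v
    have hker : (ρ + t0 • TH) *ᵥ v = 0 := (ht0psd.dotProduct_mulVec_zero_iff v).mp hqf0
    exact rank_lt_of_kernel_vector hP (hsupp t0) hvS hv0 hker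
  -- conclusion
  refine ⟨ρ + tp • TH, ρ + tm • TH, ?_, ⟨htpK, htr tp⟩, ⟨P, hP, hsupp tp⟩,
    ⟨htmK, htr tm⟩, ⟨P, hP, hsupp tm⟩, htrB tp, htrB tm, ?_, ?_⟩
  · intro h
    have h2 : (tp - tm) • TH = 0 := by
      rw [sub_smul]
      have := add_left_cancel h
      rw [this]
      exact sub_self _
    rcases smul_eq_zero.mp h2 with h3 | h3
    · have : tp = tm := by linarith [sub_eq_zero.mp h3]
      linarith
    · exact hTH0 h3
  · apply key tp htpK
    intro δ1 hδ1 ⟨hcon, _⟩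
    have : tp + δ1 ∈ K := hcon
    have : tp + δ1 ≤ tp := le_csSup hbddA this
    linarith
  · apply key tm htmK
    intro δ1 hδ1 ⟨_, hcon⟩
    have : tm - δ1 ∈ K := hcon
    have : tm ≤ tm - δ1 := csInf_le hbddB this
    linarith

end
end

section
/- Let ρ : Matrix k k ℂ be positive definite and T : Matrix k k ℂ Hermitian but not positive semidefinite. Then there exists μ > 0 such that ρ + μ • T is positive semidefinite but not positive definite. -/
open scoped ComplexOrder

open Matrix in
/-- The quadratic form of a Hermitian matrix is real. -/
lemma aux_herm_real {k : Type*} [Fintype k] {A : Matrix k k ℂ}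
    (hA : A.IsHermitian) (x : k → ℂ) :
    star x ⬝ᵥ A *ᵥ x = (((star x ⬝ᵥ A *ᵥ x).re : ℝ) : ℂ) := by
  have h : star (star x ⬝ᵥ A *ᵥ x) = star x ⬝ᵥ A *ᵥ x := by
    conv_lhs => rw [star_dotProduct, star_star, star_mulVec, ← dotProduct_mulVec, hA.eq]
  have him : (star x ⬝ᵥ A *ᵥ x).im = 0 := by
    have := congrArg Complex.im h
    simp only [Complex.star_def, Complex.conj_im] at this
    linarith
  exact (Complex.re_add_im _).symm.trans (by rw [him]; simp)

open Matrix in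
/-- A nonnegative real multiple of a PSD matrix is PSD. -/
lemma aux_psd_smul {k : Type*} [Fintype k] {A : Matrix k k ℂ}
    (hA : A.PosSemidef) {c : ℝ} (hc : 0 ≤ c) : ((c : ℂ) • A).PosSemidef := by
  refine Matrix.PosSemidef.of_dotProduct_mulVec_nonneg ?_ ?_
  · unfold Matrix.IsHermitian
    rw [conjTranspose_smul, hA.1.eq]
    congr 1
    simp [Complex.star_def, Complex.conj_ofReal]
  · intro x
    rw [smul_mulVec, dotProduct_smul, smul_eq_mul]
    have h := hA.dotProduct_mulVec_nonneg x
    rw [aux_herm_real hA.1 x] at h ⊢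
    rw [Complex.zero_le_real] at h
    rw [← Complex.ofReal_mul, Complex.zero_le_real]
    exact mul_nonneg hc h

open Matrix in
/-- Shifting a Hermitian matrix by (a lower bound of its eigenvalues) • 1 gives a PSD matrix. -/
lemma aux_shift_psd {k : Type*} [Fintype k] [DecidableEq k] {A : Matrix k k ℂ}
    (hA : A.IsHermitian) {c : ℝ} (hc : ∀ i, c ≤ hA.eigenvalues i) :
    (A - (c : ℂ) • 1).PosSemidef := by
  set U : Matrix k k ℂ := (hA.eigenvectorUnitary : Matrix k k ℂ) with hU
  have hUU : U * star U = 1 := (Matrix.mem_unitaryGroup_iff).mp hA.eigenvectorUnitary.2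
  have key : A - (c : ℂ) • 1 =
      U * Matrix.diagonal (fun i => ((hA.eigenvalues i - c : ℝ) : ℂ)) * Uᴴ := by
    have h1 : (c : ℂ) • (1 : Matrix k k ℂ) = U * ((c : ℂ) • 1) * star U := by
      rw [Matrix.mul_smul, mul_one, Matrix.smul_mul, hUU]
    conv_lhs => rw [hA.spectral_theorem, Unitary.conjStarAlgAut_apply, h1]
    rw [← Matrix.star_eq_conjTranspose, ← Matrix.sub_mul, ← Matrix.mul_sub]
    congr 2
    rw [Matrix.smul_one_eq_diagonal, Matrix.diagonal_sub]
    congr 1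
    ext i
    simp [Complex.ofReal_sub]
  rw [key]
  refine Matrix.PosSemidef.mul_mul_conjTranspose_same ?_ U
  refine Matrix.posSemidef_diagonal_iff.mpr fun i => ?_
  exact Complex.zero_le_real.mpr (sub_nonneg.mpr (hc i))

open Matrix in
/-- A positive definite matrix plus a small multiple of a Hermitian matrix is positive
definite. -/
lemma aux_exists_eps {k : Type*} [Fintype k] [DecidableEq k] [Nonempty k]
    {A T : Matrix k k ℂ} (hA : A.PosDef) (hT : T.IsHermitian) :
    ∃ ε : ℝ, 0 < ε ∧ (A + (ε : ℂ) • T).PosDef := by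
  have hne : (Finset.univ : Finset k).Nonempty := Finset.univ_nonempty
  set c : ℝ := Finset.univ.inf' hne hA.1.eigenvalues with hcdef
  set d : ℝ := Finset.univ.inf' hne hT.eigenvalues with hddef
  have hc : 0 < c := (Finset.lt_inf'_iff hne).mpr fun i _ => hA.eigenvalues_pos i
  have hcA : ∀ i, c ≤ hA.1.eigenvalues i := fun i => Finset.inf'_le _ (Finset.mem_univ i)
  have hdT : ∀ i, d ≤ hT.eigenvalues i := fun i => Finset.inf'_le _ (Finset.mem_univ i)
  set ε : ℝ := c / (2 * (|d| + 1)) with hεdef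
  have hden : (0:ℝ) < 2 * (|d| + 1) := by positivity
  have hε : 0 < ε := div_pos hc hden
  have hεc : ε * (2 * (|d| + 1)) = c := div_mul_cancel₀ _ (ne_of_gt hden)
  have hkey : 0 < c + ε * d := by
    nlinarith [neg_abs_le d, abs_nonneg d, hε]
  refine ⟨ε, hε, ?_⟩
  have h1 : (A - (c : ℂ) • 1).PosSemidef := aux_shift_psd hA.1 hcA
  have h2 : ((ε : ℂ) • (T - (d : ℂ) • 1)).PosSemidef := aux_psd_smul (aux_shift_psd hT hdT) hε.le
  have h3 : (((c + ε * d : ℝ) : ℂ) • (1 : Matrix k k ℂ)).PosDef := by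
    rw [Matrix.smul_one_eq_diagonal]
    exact Matrix.PosDef.diagonal fun i => Complex.zero_lt_real.mpr hkey
  have heq : A + (ε : ℂ) • T =
      ((c + ε * d : ℝ) : ℂ) • (1 : Matrix k k ℂ)
        + ((A - (c : ℂ) • 1) + (ε : ℂ) • (T - (d : ℂ) • 1)) := by
    push_cast
    module
  rw [heq]
  exact h3.add_posSemidef (h1.add h2)

open Matrix in
theorem exists_mu_psd_not_pd
    {k : Type*} [Fintype k] [DecidableEq k] [Nonempty k]
    (ρ T : Matrix k k ℂ) (hρ : ρ.PosDef) (hT : T.IsHermitian)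
    (hT' : ¬ T.PosSemidef) :
    ∃ μ : ℝ, 0 < μ ∧ (ρ + μ • T).PosSemidef ∧ ¬ (ρ + μ • T).PosDef := by
  classical
  have hsm : ∀ (μ : ℝ) (M : Matrix k k ℂ), μ • M = (μ : ℂ) • M := by
    intro μ M; ext i j; simp [Complex.real_smul]
  -- Hermitian-ness of the pencil
  have hherm : ∀ μ : ℝ, (ρ + (μ : ℂ) • T).IsHermitian := by
    intro μ
    refine hρ.1.add ?_
    unfold Matrix.IsHermitian
    rw [Matrix.conjTranspose_smul, hT.eq]
    congr 1
    simp [Complex.star_def, Complex.conj_ofReal]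
  -- evaluation of the quadratic form
  have heval : ∀ (μ : ℝ) (y : k → ℂ), (star y ⬝ᵥ (ρ + (μ : ℂ) • T) *ᵥ y).re
      = (star y ⬝ᵥ ρ *ᵥ y).re + μ * (star y ⬝ᵥ T *ᵥ y).re := by
    intro μ y
    rw [Matrix.add_mulVec, Matrix.smul_mulVec, dotProduct_add, dotProduct_smul,
      smul_eq_mul, Complex.add_re, Complex.re_ofReal_mul]
  -- PSD criterion
  have hmem : ∀ μ : ℝ, (ρ + (μ : ℂ) • T).PosSemidef ↔
      ∀ y : k → ℂ, 0 ≤ (star y ⬝ᵥ ρ *ᵥ y).re + μ * (star y ⬝ᵥ T *ᵥ y).re := by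
    intro μ
    constructor
    · intro h y
      have h2 := h.dotProduct_mulVec_nonneg y
      rw [aux_herm_real (hherm μ) y, Complex.zero_le_real, heval μ y] at h2
      exact h2
    · intro h
      refine .of_dotProduct_mulVec_nonneg (hherm μ) fun y => ?_
      rw [aux_herm_real (hherm μ) y, Complex.zero_le_real, heval μ y]
      exact h y
  -- the bad vector for T
  obtain ⟨x, hx⟩ : ∃ x : k → ℂ, ¬ (0 ≤ star x ⬝ᵥ T *ᵥ x) := by
    by_contra h
    push_neg at h
    exact hT' (.of_dotProduct_mulVec_nonneg hT h)
  have ht : (star x ⬝ᵥ T *ᵥ x).re < 0 := by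
    by_contra h
    push_neg at h
    exact hx (by rw [aux_herm_real hT x]; exact Complex.zero_le_real.mpr h)
  clear hx
  -- the set of good parameters
  set S : Set ℝ := {μ : ℝ | 0 ≤ μ ∧ (ρ + (μ : ℂ) • T).PosSemidef} with hSdef
  have h0S : (0 : ℝ) ∈ S := by
    refine ⟨le_rfl, ?_⟩
    simpa using hρ.posSemidef
  have hSne : S.Nonempty := ⟨0, h0S⟩
  have hbdd : BddAbove S := by
    refine ⟨(star x ⬝ᵥ ρ *ᵥ x).re / (-(star x ⬝ᵥ T *ᵥ x).re), fun μ hμ => ?_⟩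
    have h2 := (hmem μ).mp hμ.2 x
    rw [le_div_iff₀ (by linarith)]
    nlinarith
  set μs : ℝ := sSup S with hμs
  -- μs is positive
  obtain ⟨ε, hε, hεPD⟩ := aux_exists_eps hρ hT
  have hεS : ε ∈ S := ⟨hε.le, hεPD.posSemidef⟩
  have hμpos : 0 < μs := lt_of_lt_of_le hε (le_csSup hbdd hεS)
  -- μs gives a PSD matrix
  have hPSD : (ρ + (μs : ℂ) • T).PosSemidef := by
    rw [hmem]
    intro y
    set r : ℝ := (star y ⬝ᵥ ρ *ᵥ y).re
    set t : ℝ := (star y ⬝ᵥ T *ᵥ y).re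
    have hr : 0 ≤ r := by
      have h2 := hρ.posSemidef.dotProduct_mulVec_nonneg y
      rw [aux_herm_real hρ.1 y, Complex.zero_le_real] at h2
      exact h2
    rcases le_or_gt 0 t with h | h
    · have : 0 ≤ μs * t := mul_nonneg hμpos.le h
      linarith
    · have hub : μs ≤ r / (-t) := by
        refine csSup_le hSne fun μ hμ => ?_
        have h2 := (hmem μ).mp hμ.2 y
        rw [le_div_iff₀ (by linarith)]
        nlinarith
      rw [le_div_iff₀ (by linarith)] at hub
      nlinarith
  -- μs does not give a positive definite matrix
  have hNPD : ¬ (ρ + (μs : ℂ) • T).PosDef := by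
    intro hPD
    obtain ⟨ε', hε', hPD'⟩ := aux_exists_eps hPD hT
    have heq2 : ρ + ((μs + ε' : ℝ) : ℂ) • T = (ρ + (μs : ℂ) • T) + (ε' : ℂ) • T := by
      push_cast
      module
    have hmemS : μs + ε' ∈ S := by
      refine ⟨by linarith, ?_⟩
      rw [heq2]
      exact hPD'.posSemidef
    have := le_csSup hbdd hmemS
    linarith
  exact ⟨μs, hμpos, by rw [hsm]; exact hPSD, by rw [hsm]; exact hNPD⟩
end

section
/- Consider Hermitian matrices on the index type (α ⊕ β) ⊕ γ written in 3×3 block form. Let V be the block matrix whose only nonzero block is the (3,3) block X, with X : Matrix γ γ ℂ positive definite, and let W be a Hermitian block matrix whose (1,1), (1,2) and (2,1) blocks are zero, whose (2,2) block Y22 is positive definite, and whose (1,3) block is Y13 (with (3,1) block Y13ᴴ) and remaining blocks Y23, Y32 = Y23ᴴ, Y33 arbitrary (Y33 Hermitian). Then there exists t > 0 such that t • V + W is positive semidefinite if and only if Y13 = 0. -/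
open Matrix
open scoped ComplexOrder

lemma star_sum_elim {m k : Type*} (u : m → ℂ) (v : k → ℂ) :
    star (Sum.elim u v) = Sum.elim (star u) (star v) := by
  funext i; rcases i with i | i <;> rfl

lemma exists_smul_one_add_posSemidef {n : Type*} [Fintype n] [DecidableEq n]
    (M : Matrix n n ℂ) (hM : M.IsHermitian) :
    ∃ t : ℝ, 0 < t ∧ (t • (1 : Matrix n n ℂ) + M).PosSemidef := by
  classical
  set U : Matrix n n ℂ := (hM.eigenvectorUnitary : Matrix n n ℂ) with hUdef
  set t : ℝ := 1 + ∑ i, |hM.eigenvalues i| with ht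
  have htpos : 0 < t := by
    have : 0 ≤ ∑ i, |hM.eigenvalues i| := Finset.sum_nonneg fun i _ => abs_nonneg _
    linarith
  refine ⟨t, htpos, ?_⟩
  have hU : U * star U = 1 := Matrix.mem_unitaryGroup_iff.mp hM.eigenvectorUnitary.2
  have key : t • (1 : Matrix n n ℂ) + M
      = U * diagonal (fun i => ((t + hM.eigenvalues i : ℝ) : ℂ)) * star U := by
    have h1 : t • (1 : Matrix n n ℂ) = U * (t • (1 : Matrix n n ℂ)) * star U := by
      rw [mul_smul_comm, smul_mul_assoc, mul_one, hU]
    conv_lhs => rw [h1, hM.spectral_theorem, Unitary.conjStarAlgAut_apply, ← hUdef]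
    rw [← add_mul, ← mul_add]
    congr 2
    ext i j
    by_cases h : i = j <;>
      simp [diagonal_apply, h, Matrix.one_apply, Complex.real_smul, Function.comp]
  have hdiag : (diagonal (fun i => ((t + hM.eigenvalues i : ℝ) : ℂ))).PosSemidef := by
    refine posSemidef_diagonal_iff.mpr fun i => ?_
    rw [Complex.zero_le_real]
    have h1 : |hM.eigenvalues i| ≤ ∑ j, |hM.eigenvalues j| :=
      Finset.single_le_sum (f := fun j => |hM.eigenvalues j|)
        (fun j _ => abs_nonneg _) (Finset.mem_univ i)
    have h2 := neg_abs_le (hM.eigenvalues i)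
    simp only [ht]
    linarith
  rw [key]
  simpa [Matrix.star_eq_conjTranspose] using hdiag.mul_mul_conjTranspose_same U

open scoped MatrixOrder in
lemma exists_smul_add_posSemidef {n : Type*} [Fintype n] [DecidableEq n]
    (X K : Matrix n n ℂ) (hX : X.PosDef) (hK : K.IsHermitian) :
    ∃ t : ℝ, 0 < t ∧ (t • X + K).PosSemidef := by
  classical
  set S : Matrix n n ℂ := CFC.sqrt X with hSdef
  have hS : S.PosSemidef := (CFC.sqrt_nonneg X).posSemidef
  have hSS : S * S = X := CFC.sqrt_mul_sqrt_self X hX.posSemidef.nonneg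
  have hdet : IsUnit S.det := by
    have hd : S.det * S.det = X.det := by rw [← det_mul, hSS]
    have hx := hX.det_pos
    refine isUnit_iff_ne_zero.mpr fun h0 => ?_
    rw [h0, mul_zero] at hd
    rw [← hd] at hx
    exact lt_irrefl _ hx
  have hSinv : S * S⁻¹ = 1 := mul_nonsing_inv S hdet
  have hinvS : S⁻¹ * S = 1 := nonsing_inv_mul S hdet
  have hSinvH : S⁻¹.IsHermitian := hS.1.inv
  set K' : Matrix n n ℂ := S⁻¹ * K * S⁻¹ with hK'def
  have hK' : K'.IsHermitian := by
    unfold Matrix.IsHermitian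
    rw [hK'def, conjTranspose_mul, conjTranspose_mul, hSinvH.eq, hK.eq, mul_assoc]
  obtain ⟨t, ht, hpsd⟩ := exists_smul_one_add_posSemidef K' hK'
  refine ⟨t, ht, ?_⟩
  have key : t • X + K = Sᴴ * (t • (1 : Matrix n n ℂ) + K') * S := by
    rw [hS.1, mul_add, add_mul]
    congr 1
    · rw [mul_smul_comm, smul_mul_assoc, mul_one, hSS]
    · rw [hK'def, ← mul_assoc, ← mul_assoc, hSinv, one_mul, mul_assoc, hinvS, mul_one]
  rw [key]
  exact hpsd.conjTranspose_mul_mul_same S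

lemma offdiag_eq_zero_of_posSemidef {m k : Type*} [Fintype m] [Fintype k] [DecidableEq k]
    {B : Matrix m k ℂ} {D : Matrix k k ℂ}
    (h : (fromBlocks (0 : Matrix m m ℂ) B Bᴴ D).PosSemidef) : B = 0 := by
  have key : ∀ v : k → ℂ, B *ᵥ v = 0 := by
    intro v
    set w : m → ℂ := B *ᵥ v with hw
    have hr0 : 0 ≤ star w ⬝ᵥ w := by
      simpa using (posSemidef_one (n := m) (R := ℂ)).dotProduct_mulVec_nonneg w
    suffices hws : star w ⬝ᵥ w = 0 by exact dotProduct_star_self_eq_zero.mp hws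
    by_contra hne
    set r : ℝ := (star w ⬝ᵥ w).re with hrdef
    have him : (star w ⬝ᵥ w).im = 0 := by
      have := hr0
      rw [Complex.le_def] at this
      simpa using this.2.symm
    have hrnn : 0 ≤ r := by
      have := hr0
      rw [Complex.le_def] at this
      simpa [hrdef] using this.1
    have hrpos : 0 < r := by
      rcases lt_or_eq_of_le hrnn with h' | h'
      · exact h'
      · exfalso; exact hne (Complex.ext (by simpa [hrdef] using h'.symm) (by simp [him]))
    set d : ℝ := (star v ⬝ᵥ D *ᵥ v).re with hddef
    set s : ℝ := (d + 1) / (2 * r) with hsdef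
    have hQ := h.dotProduct_mulVec_nonneg (Sum.elim (-(s : ℂ) • w) v)
    simp only [star_sum_elim, fromBlocks_mulVec, sumElim_dotProduct_sumElim,
      Sum.elim_comp_inl, Sum.elim_comp_inr] at hQ
    have t1 : star (-(s : ℂ) • w) ⬝ᵥ (0 *ᵥ (-(s : ℂ) • w) + B *ᵥ v)
        = -(s : ℂ) * (star w ⬝ᵥ w) := by
      simp [star_smul, smul_dotProduct, ← hw, Complex.conj_ofReal, smul_eq_mul]
    have hbase : star v ⬝ᵥ (Bᴴ *ᵥ w) = star w ⬝ᵥ w := by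
      rw [dotProduct_mulVec, ← star_mulVec, ← hw]
    have t2 : star v ⬝ᵥ (Bᴴ *ᵥ (-(s : ℂ) • w) + D *ᵥ v)
        = -(s : ℂ) * (star w ⬝ᵥ w) + star v ⬝ᵥ (D *ᵥ v) := by
      rw [dotProduct_add, mulVec_smul, dotProduct_smul, hbase, smul_eq_mul]
    rw [t1, t2] at hQ
    rw [Complex.le_def] at hQ
    have hre := hQ.1
    simp only [Complex.add_re, Complex.mul_re, Complex.neg_re, Complex.ofReal_re,
      Complex.neg_im, Complex.ofReal_im, Complex.zero_re, him, ← hrdef, ← hddef] at hre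
    have h2sr : 2 * s * r = d + 1 := by
      have h2 : 2 * s * r = s * (2 * r) := by ring
      rw [h2, hsdef, div_mul_cancel₀ _ (mul_pos two_pos hrpos).ne']
    nlinarith
  ext i j
  have := congrFun (key (Pi.single j 1)) i
  simpa [mulVec_single] using this

theorem erdahl_lemma_fix
    {α β γ : Type*} [Fintype α] [Fintype β] [Fintype γ]
    [DecidableEq α] [DecidableEq β] [DecidableEq γ]
    (X : Matrix γ γ ℂ) (hX : X.PosDef)
    (Y22 : Matrix β β ℂ) (hY22 : Y22.PosDef)
    (Y13 : Matrix α γ ℂ) (Y23 : Matrix β γ ℂ)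
    (Y33 : Matrix γ γ ℂ) (hY33 : Y33.IsHermitian)
    (V W : Matrix ((α ⊕ β) ⊕ γ) ((α ⊕ β) ⊕ γ) ℂ)
    (hV : V = Matrix.fromBlocks (0 : Matrix (α ⊕ β) (α ⊕ β) ℂ) 0 0 X)
    (hW : W = Matrix.fromBlocks
      (Matrix.fromBlocks (0 : Matrix α α ℂ) 0 0 Y22)
      (Matrix.fromRows Y13 Y23)
      (Matrix.fromCols Y13ᴴ Y23ᴴ) Y33) :
    (∃ t : ℝ, 0 < t ∧ (t • V + W).PosSemidef) ↔ Y13 = 0 := by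
  subst hV hW
  constructor
  · rintro ⟨t, ht, hpsd⟩
    set f : α ⊕ γ → (α ⊕ β) ⊕ γ := Sum.elim (Sum.inl ∘ Sum.inl) Sum.inr with hf
    have hsub := hpsd.submatrix f
    have heq : ((t • (fromBlocks (0 : Matrix (α ⊕ β) (α ⊕ β) ℂ) 0 0 X) +
        fromBlocks (fromBlocks (0 : Matrix α α ℂ) 0 0 Y22) (fromRows Y13 Y23)
          (fromCols Y13ᴴ Y23ᴴ) Y33).submatrix f f)
        = fromBlocks (0 : Matrix α α ℂ) Y13 Y13ᴴ (t • X + Y33) := by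
      ext (i | i) (j | j) <;>
        simp [hf, fromBlocks_apply₁₁, fromBlocks_apply₁₂, fromBlocks_apply₂₁, fromBlocks_apply₂₂,
          fromRows_apply_inl, fromRows_apply_inr, fromCols_apply_inl, fromCols_apply_inr]
    rw [heq] at hsub
    exact offdiag_eq_zero_of_posSemidef hsub
  · intro h13
    subst h13
    set K : Matrix γ γ ℂ := Y33 - Y23ᴴ * Y22⁻¹ * Y23 with hK
    have hKh : K.IsHermitian :=
      hY33.sub (isHermitian_conjTranspose_mul_mul Y23 hY22.1.inv)
    obtain ⟨t, ht, hpsd⟩ := exists_smul_add_posSemidef X K hX hKh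
    refine ⟨t, ht, ?_⟩
    haveI : Invertible Y22 := hY22.isUnit.invertible
    have hN : (fromBlocks Y22 Y23 Y23ᴴ (t • X + Y33)).PosSemidef := by
      rw [PosDef.fromBlocks₁₁ _ _ hY22]
      have : t • X + Y33 - Y23ᴴ * Y22⁻¹ * Y23 = t • X + K := by
        rw [hK]; abel
      rw [this]
      exact hpsd
    have hM : t • (fromBlocks (0 : Matrix (α ⊕ β) (α ⊕ β) ℂ) 0 0 X) +
        fromBlocks (fromBlocks (0 : Matrix α α ℂ) 0 0 Y22)
          (fromRows (0 : Matrix α γ ℂ) Y23) (fromCols (0 : Matrix α γ ℂ)ᴴ Y23ᴴ) Y33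
        = fromBlocks (fromBlocks (0 : Matrix α α ℂ) 0 0 Y22)
            (fromRows (0 : Matrix α γ ℂ) Y23)
            (fromCols (0 : Matrix γ α ℂ) Y23ᴴ) (t • X + Y33) := by
      rw [fromBlocks_smul, fromBlocks_add]
      simp
    rw [hM]
    refine PosSemidef.of_dotProduct_mulVec_nonneg ?_ ?_
    · refine isHermitian_fromBlocks_iff.mpr ⟨?_, ?_, ?_, ?_⟩
      · exact isHermitian_fromBlocks_iff.mpr ⟨isHermitian_zero, by simp, by simp, hY22.1⟩
      · rw [conjTranspose_fromRows_eq_fromCols_conjTranspose]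
        simp
      · rw [conjTranspose_fromCols_eq_fromRows_conjTranspose]
        simp
      · have : (t • X)ᴴ = t • X := by
          rw [conjTranspose_smul, hX.1.eq]
          norm_num
        exact (IsHermitian.add this hY33)
    · intro x
      have hx : x = Sum.elim (Sum.elim (fun i => x (Sum.inl (Sum.inl i)))
          (fun i => x (Sum.inl (Sum.inr i)))) (fun i => x (Sum.inr i)) := by
        funext i; rcases i with (i | i) | i <;> rfl
      rw [hx]
      set u1 : α → ℂ := fun i => x (Sum.inl (Sum.inl i))
      set u2 : β → ℂ := fun i => x (Sum.inl (Sum.inr i))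
      set u3 : γ → ℂ := fun i => x (Sum.inr i)
      have hEq : star (Sum.elim (Sum.elim u1 u2) u3) ⬝ᵥ
          (fromBlocks (fromBlocks (0 : Matrix α α ℂ) 0 0 Y22)
            (fromRows (0 : Matrix α γ ℂ) Y23)
            (fromCols (0 : Matrix γ α ℂ) Y23ᴴ) (t • X + Y33) *ᵥ
            Sum.elim (Sum.elim u1 u2) u3)
          = star (Sum.elim u2 u3) ⬝ᵥ
            (fromBlocks Y22 Y23 Y23ᴴ (t • X + Y33) *ᵥ Sum.elim u2 u3) := by
        simp only [star_sum_elim, fromBlocks_mulVec, fromRows_mulVec,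
          fromCols_mulVec_sumElim, sumElim_dotProduct_sumElim,
          Sum.elim_comp_inl, Sum.elim_comp_inr, zero_mulVec, mulVec_zero,
          add_zero, zero_add, dotProduct_add, dotProduct_zero, zero_dotProduct]
      rw [hEq]
      exact hN.dotProduct_mulVec_nonneg _
end
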